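/- arXiv:2509.26445 — 4 statements merged into one kernel-verified Lean document; each statement's English description precedes it below -/
import Mathlib

section
/- The polynomial μ(z) = Σ_{k ≥ 0} m_k z^k, viewed as a polynomial with real coefficients, has only real roots; consequently its coefficient sequence is log-concave, i.e., m_k² ≥ m_{k−1} · m_{k+1} for all k ≥ 1, and unimodal. (By the main theorem of the paper, μ(z) is the Ehrhart h*-polynomial of the flow polytope F₁(G(H)), so this h*-polynomial is real-rooted, log-concave, and unimodal.) -/
open Finset Filter Pointwise

/-- Neighbors in the right shore `T` of a left vertex `i`. -/
def Nbr (E : Finset (ℕ × ℕ)) (i : ℕ) : Finset ℕ :=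
  (E.filter (fun p => p.1 = i)).image Prod.snd

/-- Neighbors in the left shore `S` of a right vertex `j`. -/
def Nbr' (E : Finset (ℕ × ℕ)) (j : ℕ) : Finset ℕ :=
  (E.filter (fun p => p.2 = j)).image Prod.fst

/-- Edges of the almost-degree-whiskered graph `W(H)`:
`Sum.inl (i,j)` is the edge `{i,j}` of `H`;
`Sum.inr (Sum.inl (i,j))` is the pendant edge `{i, w_{i,j}}`;
`Sum.inr (Sum.inr (j,i))` is the pendant edge `{j, w'_{j,i}}`. -/
abbrev WEdge : Type := (ℕ × ℕ) ⊕ ((ℕ × ℕ) ⊕ (ℕ × ℕ))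

def IsWEdge (E : Finset (ℕ × ℕ)) : WEdge → Prop
  | Sum.inl p => p ∈ E
  | Sum.inr (Sum.inl p) => p ∈ E ∧ ∃ j' ∈ Nbr E p.1, j' < p.2
  | Sum.inr (Sum.inr q) => (q.2, q.1) ∈ E ∧ ∃ i' ∈ Nbr' E q.1, q.2 < i'

/-- The `H`-vertex of the left shore covered by an edge of `W(H)`, if any. -/
def leftV : WEdge → Option ℕ
  | Sum.inl p => some p.1
  | Sum.inr (Sum.inl p) => some p.1
  | Sum.inr (Sum.inr _) => none

/-- The `H`-vertex of the right shore covered by an edge of `W(H)`, if any. -/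
def rightV : WEdge → Option ℕ
  | Sum.inl p => some p.2
  | Sum.inr (Sum.inl _) => none
  | Sum.inr (Sum.inr q) => some q.1

/-- A matching of `W(H)`: a set of pairwise disjoint edges of `W(H)`.
(Leaf vertices are covered by at most one edge label automatically.) -/
def IsMatching (E : Finset (ℕ × ℕ)) (M : Set WEdge) : Prop :=
  (∀ e ∈ M, IsWEdge E e) ∧
  ∀ e ∈ M, ∀ e' ∈ M, e ≠ e' →
    (leftV e = none ∨ leftV e ≠ leftV e') ∧
    (rightV e = none ∨ rightV e ≠ rightV e')

/-- `mCount E k` is `m_k`, the number of `k`-matchings of `W(H)`. -/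
noncomputable def mCount (E : Finset (ℕ × ℕ)) (k : ℕ) : ℕ :=
  {M : Set WEdge | IsMatching E M ∧ M.ncard = k}.ncard

/-- The bipartite graph `H` on vertex set `ℕ ⊕ ℕ`. -/
def bip (E : Finset (ℕ × ℕ)) : SimpleGraph (ℕ ⊕ ℕ) where
  Adj x y := (∃ i j, (i, j) ∈ E ∧ x = Sum.inl i ∧ y = Sum.inr j) ∨
             (∃ i j, (i, j) ∈ E ∧ x = Sum.inr j ∧ y = Sum.inl i)
  symm := by
    refine ⟨?_⟩
    rintro x y (⟨i, j, h, rfl, rfl⟩ | ⟨i, j, h, rfl, rfl⟩)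
    · exact Or.inr ⟨i, j, h, rfl, rfl⟩
    · exact Or.inl ⟨i, j, h, rfl, rfl⟩
  loopless := by
    refine ⟨?_⟩
    rintro x (⟨i, j, _, h1, h2⟩ | ⟨i, j, _, h1, h2⟩) <;> rw [h1] at h2 <;>
      cases h2

/-- `H` is connected (as a graph on the vertex set `S ⊎ T`). -/
def HConnected (n m : ℕ) (E : Finset (ℕ × ℕ)) : Prop :=
  ((bip E).induce ((Sum.inl '' (Set.Icc 1 n)) ∪ (Sum.inr '' (Set.Icc 1 m)))).Connected


/-- The unsigned matching polynomial `μ(z) = Σ_k m_k z^k` of `W(H)`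
(the sum is finite: `m_k = 0` for `k > 3|E|`). -/
noncomputable def matchPoly (E : Finset (ℕ × ℕ)) : Polynomial ℝ :=
  ∑ k ∈ Finset.range (3 * E.card + 1),
    Polynomial.C ((mCount E k : ℝ)) * Polynomial.X ^ k

namespace HL

variable {α : Type*} [DecidableEq α]

def Cmp (L R : α → Option ℕ) (e e' : α) : Prop :=
  (L e = none ∨ L e ≠ L e') ∧ (R e = none ∨ R e ≠ R e')

lemma optAux (a b : Option ℕ) : (a = none ∨ a ≠ b) ↔ (b = none ∨ b ≠ a) := by
  rcases a with _ | a <;> rcases b with _ | b <;> simp [eq_comm]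

lemma Cmp_comm {L R : α → Option ℕ} {e e' : α} : Cmp L R e e' ↔ Cmp L R e' e := by
  unfold Cmp; rw [optAux (L e), optAux (R e)]

lemma Cmp_swap {L R : α → Option ℕ} {e e' : α} : Cmp L R e e' ↔ Cmp R L e e' := and_comm

def IsMat (L R : α → Option ℕ) (M : Finset α) : Prop :=
  ∀ e ∈ M, ∀ e' ∈ M, e ≠ e' → Cmp L R e e'

lemma IsMat_swap (L R : α → Option ℕ) : IsMat L R = IsMat (α := α) R L := by
  funext M; unfold IsMat
  refine propext ⟨fun h e he e' he' hne => ?_, fun h e he e' he' hne => ?_⟩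
  · exact Cmp_swap.mp (h e he e' he' hne)
  · exact Cmp_swap.mpr (h e he e' he' hne)

lemma IsMat.subset {L R : α → Option ℕ} {M M' : Finset α} (h : M' ⊆ M)
    (hM : IsMat L R M) : IsMat L R M' :=
  fun e he e' he' hne => hM e (h he) e' (h he') hne

open Classical in
noncomputable def matchF (L R : α → Option ℕ) (s : Finset α) : Finset (Finset α) :=
  s.powerset.filter (IsMat L R)

lemma mem_matchF {L R : α → Option ℕ} {s : Finset α} {M : Finset α} :
    M ∈ matchF L R s ↔ M ⊆ s ∧ IsMat L R M := by
  classical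
  simp [matchF, Finset.mem_filter, Finset.mem_powerset]

lemma matchF_swap (L R : α → Option ℕ) (s : Finset α) :
    matchF L R s = matchF R L s := by
  unfold matchF; rw [IsMat_swap]

noncomputable def fz (L R : α → Option ℕ) (s : Finset α) (z : ℂ) : ℂ :=
  ∑ M ∈ matchF L R s, z ^ M.card

lemma fz_swap (L R : α → Option ℕ) (s : Finset α) (z : ℂ) :
    fz L R s z = fz R L s z := by unfold fz; rw [matchF_swap]

lemma fz_empty (L R : α → Option ℕ) (z : ℂ) : fz L R (∅ : Finset α) z = 1 := by
  classical
  have : matchF L R (∅ : Finset α) = {∅} := by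
    ext M; simp [mem_matchF, Finset.subset_empty]
    rintro rfl
    intro e he; simp at he
  simp [fz, this]

/-- delete a left vertex -/
def dL (L : α → Option ℕ) (s : Finset α) (i : ℕ) : Finset α :=
  s.filter (fun e => ¬ L e = some i)

/-- edges at a left vertex -/
def atL (L : α → Option ℕ) (s : Finset α) (i : ℕ) : Finset α :=
  s.filter (fun e => L e = some i)

open Classical in
/-- the set of edges compatible with `e` -/
noncomputable def sE (L R : α → Option ℕ) (s : Finset α) (e : α) : Finset α :=
  s.filter (fun e' => Cmp L R e e')

lemma key_partition (L R : α → Option ℕ) (s : Finset α) (i : ℕ) (g : Finset α → ℂ) :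
    ∑ M ∈ matchF L R s, g M =
      (∑ M ∈ matchF L R (dL L s i), g M) +
      ∑ e ∈ atL L s i, ∑ M ∈ matchF L R (sE L R s e), g (insert e M) := by
  classical
  have h1 : ∑ M ∈ matchF L R s, g M =
      (∑ M ∈ (matchF L R s).filter (fun M => ∀ e ∈ M, ¬ L e = some i), g M) +
      ∑ M ∈ (matchF L R s).filter (fun M => ¬ ∀ e ∈ M, ¬ L e = some i), g M :=
    (Finset.sum_filter_add_sum_filter_not _ _ _).symm
  have h2 : (matchF L R s).filter (fun M => ∀ e ∈ M, ¬ L e = some i)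
      = matchF L R (dL L s i) := by
    ext M
    simp only [Finset.mem_filter, mem_matchF, dL]
    constructor
    · rintro ⟨⟨hs, hm⟩, hall⟩
      exact ⟨fun e he => Finset.mem_filter.mpr ⟨hs he, hall e he⟩, hm⟩
    · rintro ⟨hs, hm⟩
      refine ⟨⟨fun e he => (Finset.mem_filter.mp (hs he)).1, hm⟩,
        fun e he => (Finset.mem_filter.mp (hs he)).2⟩
  have h3 : (matchF L R s).filter (fun M => ¬ ∀ e ∈ M, ¬ L e = some i)
      = (atL L s i).biUnion (fun e => (matchF L R (sE L R s e)).image (insert e)) := by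
    ext M
    simp only [Finset.mem_filter, mem_matchF, Finset.mem_biUnion, Finset.mem_image, atL]
    constructor
    · rintro ⟨⟨hs, hm⟩, hex⟩
      push_neg at hex
      obtain ⟨e, heM, hei⟩ := hex
      refine ⟨e, ⟨hs heM, hei⟩, M.erase e, ⟨?_, hm.subset (Finset.erase_subset _ _)⟩, Finset.insert_erase heM⟩
      intro e' he'
      have he'M : e' ∈ M := Finset.mem_of_mem_erase he'
      have hne : e ≠ e' := fun h => (Finset.ne_of_mem_erase he') h.symm
      exact Finset.mem_filter.mpr ⟨hs he'M, hm e heM e' he'M hne⟩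
    · rintro ⟨e, hei, M', ⟨hs', hm'⟩, rfl⟩
      have hei' := hei
      have heM' : e ∉ M' := by
        intro h
        have := Finset.mem_filter.mp (hs' h)
        have hc := this.2
        exact absurd hc.1 (by simp [hei'.2])
      refine ⟨⟨?_, ?_⟩, ?_⟩
      · intro x hx
        rcases Finset.mem_insert.mp hx with rfl | hx
        · exact hei'.1
        · exact (Finset.mem_filter.mp (hs' hx)).1
      · intro x hx y hy hxy
        rcases Finset.mem_insert.mp hx with hxe | hx2
        · rcases Finset.mem_insert.mp hy with hye | hy2
          · exact absurd (hxe.trans hye.symm) hxy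
          · rw [hxe]; exact (Finset.mem_filter.mp (hs' hy2)).2
        · rcases Finset.mem_insert.mp hy with hye | hy2
          · rw [hye]; exact Cmp_comm.mp (Finset.mem_filter.mp (hs' hx2)).2
          · exact hm' x hx2 y hy2 hxy
      · push_neg
        exact ⟨e, Finset.mem_insert_self e M', hei'.2⟩
  have hdisj : (↑(atL L s i) : Set α).PairwiseDisjoint
      (fun e => (matchF L R (sE L R s e)).image (insert e)) := by
    intro e he e' he' hne
    simp only [Finset.disjoint_left]
    rintro M hM hM'
    simp only [Finset.mem_image] at hM hM'
    obtain ⟨A, hA, rfl⟩ := hM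
    obtain ⟨B, hB, hBA⟩ := hM'
    have he'mem : e' ∈ insert e A := by rw [← hBA]; exact Finset.mem_insert_self _ _
    rcases Finset.mem_insert.mp he'mem with h | h
    · exact hne h.symm
    · have := Finset.mem_filter.mp ((mem_matchF.mp hA).1 h)
      have hc := this.2.1
      have hLe : L e = some i := (Finset.mem_filter.mp (Finset.mem_coe.mp he)).2
      have hLe' : L e' = some i := (Finset.mem_filter.mp (Finset.mem_coe.mp he')).2
      rcases hc with h1 | h1
      · rw [hLe] at h1; cases h1
      · rw [hLe, hLe'] at h1; exact h1 rfl
  rw [h1, h2, h3, Finset.sum_biUnion hdisj]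
  congr 1
  refine Finset.sum_congr rfl (fun e he => ?_)
  rw [Finset.sum_image]
  intro A hA B hB hAB
  have heA : e ∉ A := by
    intro h
    have := (Finset.mem_filter.mp ((mem_matchF.mp hA).1 h)).2.1
    have hLe : L e = some i := (Finset.mem_filter.mp he).2
    rcases this with h1 | h1
    · rw [hLe] at h1; cases h1
    · exact h1 rfl
  have heB : e ∉ B := by
    intro h
    have := (Finset.mem_filter.mp ((mem_matchF.mp hB).1 h)).2.1
    have hLe : L e = some i := (Finset.mem_filter.mp he).2
    rcases this with h1 | h1
    · rw [hLe] at h1; cases h1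
    · exact h1 rfl
  have : (insert e A).erase e = (insert e B).erase e := by rw [hAB]
  rwa [Finset.erase_insert heA, Finset.erase_insert heB] at this


lemma sE_none {L R : α → Option ℕ} {s : Finset α} {e : α} {i : ℕ}
    (hL : L e = some i) (hR : R e = none) : sE L R s e = dL L s i := by
  classical
  unfold sE dL
  apply Finset.filter_congr
  intro e' _
  simp [Cmp, hL, hR, eq_comm]

lemma sE_some {L R : α → Option ℕ} {s : Finset α} {e : α} {i j : ℕ}
    (hL : L e = some i) (hR : R e = some j) :
    sE L R s e = dL R (dL L s i) j := by
  classical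
  unfold sE dL
  rw [Finset.filter_filter]
  apply Finset.filter_congr
  intro e' _
  simp [Cmp, hL, hR, eq_comm]

lemma not_mem_sE {L R : α → Option ℕ} {s : Finset α} {e : α} {i : ℕ}
    (hL : L e = some i) : e ∉ sE L R s e := by
  classical
  simp [sE, Cmp, hL]

lemma fz_rec (L R : α → Option ℕ) (s : Finset α) (i : ℕ) (z : ℂ) :
    fz L R s z = fz L R (dL L s i) z +
      ∑ e ∈ atL L s i, z * fz L R (sE L R s e) z := by
  classical
  unfold fz
  rw [key_partition L R s i (fun M => z ^ M.card)]
  congr 1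
  refine Finset.sum_congr rfl fun e he => ?_
  have hL : L e = some i := (Finset.mem_filter.mp he).2
  rw [Finset.mul_sum]
  refine Finset.sum_congr rfl fun M hM => ?_
  have heM : e ∉ M := fun h => not_mem_sE hL ((mem_matchF.mp hM).1 h)
  rw [Finset.card_insert_of_notMem heM, pow_succ]
  ring

/-- The cone of directions between the positive real axis and `z`. -/
def Cone (z w : ℂ) : Prop := 0 < w.im ∧ (w * (starRingEnd ℂ) z).im ≤ 0

lemma cone_self {z : ℂ} (hz : 0 < z.im) : Cone z z := by
  refine ⟨hz, ?_⟩
  rw [Complex.mul_conj]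
  simp

lemma cone_sum {z : ℂ} {β : Type*} {s : Finset β} (hs : s.Nonempty) {h : β → ℂ}
    (H : ∀ e ∈ s, Cone z (h e)) : Cone z (∑ e ∈ s, h e) := by
  constructor
  · rw [Complex.im_sum]
    exact Finset.sum_pos (fun e he => (H e he).1) hs
  · rw [Finset.sum_mul, Complex.im_sum]
    exact Finset.sum_nonpos (fun e he => (H e he).2)

lemma cone_div {z w : ℂ} (hz : 0 < z.im) (hw : Cone z w) :
    (1 : ℂ) + w ≠ 0 ∧ Cone z (z / (1 + w)) := by
  have him : (1 + w).im = w.im := by simp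
  have hne : (1 : ℂ) + w ≠ 0 := by
    intro h
    rw [h] at him
    simp at him
    exact absurd him.symm (ne_of_gt hw.1)
  have hnsq : 0 < Complex.normSq (1 + w) := Complex.normSq_pos.mpr hne
  refine ⟨hne, ?_, ?_⟩
  · rw [Complex.div_im]
    have h1 : (0:ℝ) ≤ - (w * (starRingEnd ℂ) z).im := neg_nonneg.mpr hw.2
    have hre : (1 + w).re = 1 + w.re := by simp
    have key : z.im * (1 + w).re - z.re * (1 + w).im
        = z.im - (w * (starRingEnd ℂ) z).im := by
      simp [Complex.mul_im, Complex.conj_re, Complex.conj_im, hre, him]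
      ring
    have : 0 < z.im * (1 + w).re - z.re * (1 + w).im := by
      rw [key]; linarith [hz, hw.2]
    have := div_pos this hnsq
    calc (0:ℝ) < (z.im * (1 + w).re - z.re * (1 + w).im) / Complex.normSq (1 + w) := this
      _ = z.im * (1 + w).re / Complex.normSq (1 + w)
          - z.re * (1 + w).im / Complex.normSq (1 + w) := by ring
  · have h2 : z / (1 + w) * (starRingEnd ℂ) z = ↑(Complex.normSq z) / (1 + w) := by
      rw [div_mul_eq_mul_div, Complex.mul_conj]
    rw [h2, Complex.div_im]
    have h3 : (0:ℝ) ≤ (Complex.normSq z : ℝ) * (1 + w).im / Complex.normSq (1 + w) := by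
      apply div_nonneg _ (le_of_lt hnsq)
      have : (0:ℝ) < (1 + w).im := by rw [him]; exact hw.1
      exact mul_nonneg (Complex.normSq_nonneg z) (le_of_lt this)
    simp only [Complex.ofReal_im, Complex.ofReal_re, zero_mul, zero_div]
    linarith

lemma dL_empty (L : α → Option ℕ) (i : ℕ) : dL L (∅ : Finset α) i = ∅ := by
  simp [dL]

lemma dL_of_atL_empty {L : α → Option ℕ} {s : Finset α} {i : ℕ}
    (h : atL L s i = ∅) : dL L s i = s := by
  classical
  apply Finset.filter_true_of_mem
  intro e he hL
  have : e ∈ atL L s i := Finset.mem_filter.mpr ⟨he, hL⟩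
  rw [h] at this
  simp at this

lemma main : ∀ (n : ℕ) (L R : α → Option ℕ) (s : Finset α),
    s.card ≤ n → (∀ e ∈ s, L e ≠ none ∨ R e ≠ none) →
    ∀ z : ℂ, 0 < z.im →
      fz L R s z ≠ 0 ∧ ∀ i : ℕ, Cone z (z * fz L R (dL L s i) z / fz L R s z) := by
  intro n
  induction n with
  | zero =>
    intro L R s hcard _ z hz
    have hs : s = ∅ := Finset.card_eq_zero.mp (Nat.le_zero.mp hcard)
    subst hs
    refine ⟨by rw [fz_empty]; exact one_ne_zero, fun i => ?_⟩
    rw [dL_empty, fz_empty]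
    simpa using cone_self hz
  | succ n IH =>
    intro L R s hcard hLR z hz
    have claimA : ∀ (L' R' : α → Option ℕ),
        (∀ e ∈ s, L' e ≠ none ∨ R' e ≠ none) → ∀ i : ℕ, (atL L' s i).Nonempty →
        fz L' R' s z ≠ 0 ∧ Cone z (z * fz L' R' (dL L' s i) z / fz L' R' s z) := by
      intro L' R' hLR' i hne
      set s₀ := dL L' s i with hs₀
      have hsub : s₀ ⊆ s := Finset.filter_subset _ _
      obtain ⟨e₀, he₀⟩ := hne
      have he₀s : e₀ ∈ s := (Finset.mem_filter.mp he₀).1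
      have he₀L : L' e₀ = some i := (Finset.mem_filter.mp he₀).2
      have he₀n : e₀ ∉ s₀ := by
        intro h
        exact (Finset.mem_filter.mp h).2 he₀L
      have hlt : s₀.card < s.card :=
        Finset.card_lt_card ⟨hsub, fun h => he₀n (h he₀s)⟩
      have hcard₀ : s₀.card ≤ n := by omega
      have hLR₀ : ∀ e ∈ s₀, L' e ≠ none ∨ R' e ≠ none := fun e he => hLR' e (hsub he)
      have hRL₀ : ∀ e ∈ s₀, R' e ≠ none ∨ L' e ≠ none := fun e he => (hLR₀ e he).symm
      have IH1 := IH L' R' s₀ hcard₀ hLR₀ z hz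
      have IH2 := IH R' L' s₀ hcard₀ hRL₀ z hz
      have hfz0 : fz L' R' s₀ z ≠ 0 := IH1.1
      set W := ∑ e ∈ atL L' s i, z * fz L' R' (sE L' R' s e) z / fz L' R' s₀ z with hWdef
      have hWcone : Cone z W := by
        refine cone_sum ⟨e₀, he₀⟩ ?_
        intro e he
        have heL : L' e = some i := (Finset.mem_filter.mp he).2
        rcases hR : R' e with _ | j
        · rw [sE_none heL hR, ← hs₀, mul_div_assoc, div_self hfz0, mul_one]
          exact cone_self hz
        · rw [sE_some heL hR, ← hs₀]
          have := IH2.2 j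
          rwa [fz_swap R' L', fz_swap R' L'] at this
      obtain ⟨h1W, hconeW⟩ := cone_div hz hWcone
      have hfzs : fz L' R' s z = fz L' R' s₀ z * (1 + W) := by
        rw [fz_rec L' R' s i z, ← hs₀, mul_add, mul_one, hWdef, Finset.mul_sum]
        congr 1
        refine Finset.sum_congr rfl fun e he => ?_
        rw [mul_comm (fz L' R' s₀ z) _, div_mul_cancel₀ _ hfz0]
      constructor
      · rw [hfzs]; exact mul_ne_zero hfz0 h1W
      · rw [hfzs]
        have : z * fz L' R' s₀ z / (fz L' R' s₀ z * (1 + W)) = z / (1 + W) := by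
          rw [mul_comm z _, mul_div_mul_left _ _ hfz0]
        rw [this]
        exact hconeW
    have hmain : fz L R s z ≠ 0 := by
      rcases Finset.eq_empty_or_nonempty s with rfl | ⟨e₀, he₀⟩
      · rw [fz_empty]; exact one_ne_zero
      · rcases hL : L e₀ with _ | i
        · rcases hRe : R e₀ with _ | j
          · exact absurd hRe (by have := hLR e₀ he₀; tauto)
          · have := (claimA R L (fun e he => (hLR e he).symm) j
              ⟨e₀, Finset.mem_filter.mpr ⟨he₀, hRe⟩⟩).1
            rwa [fz_swap R L] at this
        · exact (claimA L R hLR i ⟨e₀, Finset.mem_filter.mpr ⟨he₀, hL⟩⟩).1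
    refine ⟨hmain, fun i => ?_⟩
    rcases Finset.eq_empty_or_nonempty (atL L s i) with hemp | hne
    · rw [dL_of_atL_empty hemp, mul_div_assoc, div_self hmain, mul_one]
      exact cone_self hz
    · exact (claimA L R hLR i hne).2

end HL


open HL Polynomial

open Classical in
noncomputable def wedges (E : Finset (ℕ × ℕ)) : Finset WEdge :=
  (E.image Sum.inl) ∪
  ((E.filter (fun p => ∃ j' ∈ Nbr E p.1, j' < p.2)).image (fun p => Sum.inr (Sum.inl p))) ∪
  ((E.filter (fun p => ∃ i' ∈ Nbr' E p.2, p.1 < i')).image (fun p => Sum.inr (Sum.inr (p.2, p.1))))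

lemma mem_wedges {E : Finset (ℕ × ℕ)} {e : WEdge} : e ∈ wedges E ↔ IsWEdge E e := by
  classical
  rcases e with p | p | q
  · simp [wedges, IsWEdge]
  · simp only [wedges, Finset.mem_union, Finset.mem_image, Finset.mem_filter, IsWEdge]
    constructor
    · rintro ((⟨a, _, h⟩ | ⟨a, ha, h⟩) | ⟨a, _, h⟩)
      · exact absurd h (by simp)
      · obtain rfl : a = p := by injection (by injection h)
        exact ha
      · exact absurd h (by simp)
    · intro h
      exact Or.inl (Or.inr ⟨p, h, rfl⟩)
  · simp only [wedges, Finset.mem_union, Finset.mem_image, Finset.mem_filter, IsWEdge]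
    constructor
    · rintro ((⟨a, _, h⟩ | ⟨a, _, h⟩) | ⟨a, ha, h⟩)
      · exact absurd h (by simp)
      · exact absurd h (by simp)
      · obtain rfl : (a.2, a.1) = q := by injection (by injection h)
        simpa using ha
    · intro h
      refine Or.inr ⟨(q.2, q.1), ?_, rfl⟩
      simpa using h

lemma card_wedges_le (E : Finset (ℕ × ℕ)) : (wedges E).card ≤ 3 * E.card := by
  classical
  have h1 := Finset.card_union_le
    ((E.image (Sum.inl : ℕ × ℕ → WEdge)) ∪
      ((E.filter (fun p => ∃ j' ∈ Nbr E p.1, j' < p.2)).image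
        (fun p => (Sum.inr (Sum.inl p) : WEdge))))
    ((E.filter (fun p => ∃ i' ∈ Nbr' E p.2, p.1 < i')).image
      (fun p => (Sum.inr (Sum.inr (p.2, p.1)) : WEdge)))
  have h2 := Finset.card_union_le (E.image (Sum.inl : ℕ × ℕ → WEdge))
    ((E.filter (fun p => ∃ j' ∈ Nbr E p.1, j' < p.2)).image
      (fun p => (Sum.inr (Sum.inl p) : WEdge)))
  have h3 : (E.image (Sum.inl : ℕ × ℕ → WEdge)).card ≤ E.card := Finset.card_image_le
  have h4 : ((E.filter (fun p => ∃ j' ∈ Nbr E p.1, j' < p.2)).image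
      (fun p => (Sum.inr (Sum.inl p) : WEdge))).card ≤ E.card :=
    le_trans Finset.card_image_le (Finset.card_filter_le _ _)
  have h5 : ((E.filter (fun p => ∃ i' ∈ Nbr' E p.2, p.1 < i')).image
      (fun p => (Sum.inr (Sum.inr (p.2, p.1)) : WEdge))).card ≤ E.card :=
    le_trans Finset.card_image_le (Finset.card_filter_le _ _)
  unfold wedges
  omega

open Classical in
noncomputable def mcnt (E : Finset (ℕ × ℕ)) (k : ℕ) : ℕ :=
  ((wedges E).powerset.filter (fun M => HL.IsMat leftV rightV M ∧ M.card = k)).card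

lemma mCount_eq (E : Finset (ℕ × ℕ)) (k : ℕ) : mCount E k = mcnt E k := by
  classical
  have himg : {M : Set WEdge | IsMatching E M ∧ M.ncard = k}
      = (fun (F : Finset WEdge) => (↑F : Set WEdge)) ''
        ↑((wedges E).powerset.filter (fun M => HL.IsMat leftV rightV M ∧ M.card = k)) := by
    ext M
    simp only [Set.mem_setOf_eq, Set.mem_image, Finset.mem_coe, Finset.mem_filter,
      Finset.mem_powerset]
    constructor
    · rintro ⟨⟨h1, h2⟩, hk⟩
      have hfin : M.Finite := Set.Finite.subset (wedges E).finite_toSet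
        (fun e he => mem_wedges.mpr (h1 e he))
      refine ⟨hfin.toFinset, ⟨?_, ?_, ?_⟩, hfin.coe_toFinset⟩
      · intro e he; rw [Set.Finite.mem_toFinset] at he; exact mem_wedges.mpr (h1 e he)
      · intro e he e' he' hne
        rw [Set.Finite.mem_toFinset] at he he'
        exact h2 e he e' he' hne
      · rw [← hk, ← Set.ncard_coe_finset, hfin.coe_toFinset]
    · rintro ⟨F, ⟨hsub, hmat, hcard⟩, rfl⟩
      exact ⟨⟨fun e he => mem_wedges.mp (hsub he),
        fun e he e' he' hne => hmat e he e' he' hne⟩,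
        by rw [Set.ncard_coe_finset]; exact hcard⟩
  rw [mCount, himg, Set.ncard_image_of_injective _ Finset.coe_injective,
    Set.ncard_coe_finset]
  rfl

lemma mcnt_eq_zero {E : Finset (ℕ × ℕ)} {k : ℕ} (h : (wedges E).card < k) :
    mcnt E k = 0 := by
  classical
  rw [mcnt, Finset.card_eq_zero, Finset.filter_eq_empty_iff]
  rintro M hM ⟨_, hk⟩
  have := Finset.card_le_card (Finset.mem_powerset.mp hM)
  omega

lemma mCount_eq_zero {E : Finset (ℕ × ℕ)} {k : ℕ} (h : 3 * E.card < k) :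
    mCount E k = 0 := by
  rw [mCount_eq]
  exact mcnt_eq_zero (lt_of_le_of_lt (card_wedges_le E) h)

lemma mCount_zero (E : Finset (ℕ × ℕ)) : mCount E 0 = 1 := by
  classical
  rw [mCount_eq, mcnt]
  have : ((wedges E).powerset.filter
      (fun M => HL.IsMat leftV rightV M ∧ M.card = 0)) = {∅} := by
    ext M
    simp only [Finset.mem_filter, Finset.mem_powerset, Finset.mem_singleton,
      Finset.card_eq_zero]
    constructor
    · rintro ⟨_, _, rfl⟩; rfl
    · rintro rfl
      exact ⟨Finset.empty_subset _, fun e he => absurd he (Finset.notMem_empty e), rfl⟩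
  rw [this]; rfl

lemma fz_eq_sum {α : Type*} [DecidableEq α] (L R : α → Option ℕ) (s : Finset α) (z : ℂ) :
    HL.fz L R s z = ∑ k ∈ Finset.range (s.card + 1),
      (((HL.matchF L R s).filter (fun M => M.card = k)).card : ℂ) * z ^ k := by
  classical
  have hmaps : ∀ M ∈ HL.matchF L R s, M.card ∈ Finset.range (s.card + 1) := by
    intro M hM
    rw [Finset.mem_range, Nat.lt_succ_iff]
    exact Finset.card_le_card (HL.mem_matchF.mp hM).1
  rw [HL.fz, ← Finset.sum_fiberwise_of_maps_to hmaps (fun M => z ^ M.card)]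
  refine Finset.sum_congr rfl fun k _ => ?_
  rw [Finset.sum_congr rfl (fun M hM => ?_), Finset.sum_const, nsmul_eq_mul]
  exact congrArg (z ^ ·) (Finset.mem_filter.mp hM).2

lemma mcnt_eq_filter (E : Finset (ℕ × ℕ)) (k : ℕ) :
    mcnt E k = ((HL.matchF leftV rightV (wedges E)).filter (fun M => M.card = k)).card := by
  classical
  rw [mcnt, HL.matchF, Finset.filter_filter]

lemma aeval_matchPoly (E : Finset (ℕ × ℕ)) (z : ℂ) :
    Polynomial.aeval z (matchPoly E) = HL.fz leftV rightV (wedges E) z := by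
  classical
  have h1 : Polynomial.aeval z (matchPoly E)
      = ∑ k ∈ Finset.range (3 * E.card + 1), (mCount E k : ℂ) * z ^ k := by
    rw [matchPoly, map_sum]
    refine Finset.sum_congr rfl fun k _ => ?_
    rw [map_mul, Polynomial.aeval_C, map_pow, Polynomial.aeval_X]
    norm_num
  have hle : (wedges E).card + 1 ≤ 3 * E.card + 1 := by
    have := card_wedges_le E; omega
  have h2 : ∑ k ∈ Finset.range (3 * E.card + 1), (mCount E k : ℂ) * z ^ k
      = ∑ k ∈ Finset.range ((wedges E).card + 1), (mCount E k : ℂ) * z ^ k := by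
    symm
    apply Finset.sum_subset (Finset.range_subset_range.mpr hle)
    intro k _ hk
    rw [Finset.mem_range, Nat.lt_succ_iff, not_le] at hk
    rw [mCount_eq, mcnt_eq_zero hk]
    simp
  rw [h1, h2, fz_eq_sum]
  refine Finset.sum_congr rfl fun k _ => ?_
  rw [mCount_eq, mcnt_eq_filter]

lemma matchPoly_ne_zero_of_im_pos (E : Finset (ℕ × ℕ)) {z : ℂ} (hz : 0 < z.im) :
    Polynomial.aeval z (matchPoly E) ≠ 0 := by
  rw [aeval_matchPoly]
  have hLR : ∀ e ∈ wedges E, leftV e ≠ none ∨ rightV e ≠ none := by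
    intro e _
    rcases e with p | p | q <;> simp [leftV, rightV]
  exact (HL.main (wedges E).card leftV rightV (wedges E) le_rfl hLR z hz).1

lemma matchPoly_root_real (E : Finset (ℕ × ℕ)) {z : ℂ}
    (hroot : Polynomial.aeval z (matchPoly E) = 0) : z.im = 0 := by
  by_contra him
  rcases lt_or_gt_of_ne him with hlt | hgt
  · have hz : 0 < ((starRingEnd ℂ) z).im := by
      simpa using neg_pos.mpr hlt
    apply matchPoly_ne_zero_of_im_pos E hz
    rw [Polynomial.aeval_conj, hroot, map_zero]
  · exact matchPoly_ne_zero_of_im_pos E hgt hroot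

lemma coeff_matchPoly (E : Finset (ℕ × ℕ)) (k : ℕ) :
    (matchPoly E).coeff k = (mCount E k : ℝ) := by
  classical
  rw [matchPoly, Polynomial.finset_sum_coeff]
  by_cases hk : k < 3 * E.card + 1
  · rw [Finset.sum_eq_single k]
    · rw [Polynomial.coeff_C_mul_X_pow, if_pos rfl]
    · intro j _ hj
      rw [Polynomial.coeff_C_mul_X_pow, if_neg (Ne.symm hj)]
    · intro h; exact absurd (Finset.mem_range.mpr hk) h
  · push_neg at hk
    rw [Finset.sum_eq_zero, mCount_eq_zero (by omega), Nat.cast_zero]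
    intro j hj
    rw [Finset.mem_range] at hj
    rw [Polynomial.coeff_C_mul_X_pow, if_neg (by omega)]

lemma matchPoly_ne_zero (E : Finset (ℕ × ℕ)) : matchPoly E ≠ 0 := by
  intro h
  have h0 := coeff_matchPoly E 0
  rw [h, Polynomial.coeff_zero, mCount_zero] at h0
  norm_num at h0

lemma lc_pos (E : Finset (ℕ × ℕ)) : 0 < (matchPoly E).leadingCoeff := by
  have h0 : (matchPoly E).leadingCoeff ≠ 0 :=
    Polynomial.leadingCoeff_ne_zero.mpr (matchPoly_ne_zero E)
  rw [Polynomial.leadingCoeff, coeff_matchPoly] at h0 ⊢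
  exact lt_of_le_of_ne (Nat.cast_nonneg _) (Ne.symm h0)

lemma eval_ge_one (E : Finset (ℕ × ℕ)) {t : ℝ} (ht : 0 ≤ t) :
    1 ≤ (matchPoly E).eval t := by
  rw [Polynomial.eval_eq_sum_range]
  have h0 : (0:ℕ) ∈ Finset.range ((matchPoly E).natDegree + 1) := by simp
  calc (1:ℝ) = (matchPoly E).coeff 0 * t ^ 0 := by
        simp [coeff_matchPoly, mCount_zero]
    _ ≤ ∑ i ∈ Finset.range ((matchPoly E).natDegree + 1), (matchPoly E).coeff i * t ^ i := by
        refine Finset.single_le_sum (f := fun i => (matchPoly E).coeff i * t ^ i)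
          (fun i _ => ?_) h0
        exact mul_nonneg (by rw [coeff_matchPoly]; positivity) (pow_nonneg ht i)

lemma exists_prod (E : Finset (ℕ × ℕ)) : ∃ mm : Multiset ℝ, (∀ r ∈ mm, r < 0) ∧
    matchPoly E = Polynomial.C (matchPoly E).leadingCoeff *
      (mm.map (fun a => Polynomial.X - Polynomial.C a)).prod := by
  classical
  set P := matchPoly E with hPdef
  have hP0 : P ≠ 0 := matchPoly_ne_zero E
  have hinj : Function.Injective (algebraMap ℝ ℂ) := (algebraMap ℝ ℂ).injective
  set Pc := P.map (algebraMap ℝ ℂ) with hPc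
  have hPc0 : Pc ≠ 0 := (Polynomial.map_ne_zero_iff hinj).mpr hP0
  have hsplit : Pc.Splits := IsAlgClosed.splits _
  have hfact := hsplit.eq_prod_roots
  have hroots_real : ∀ r ∈ Pc.roots, r.im = 0 ∧ r.re < 0 := by
    intro r hr
    have hroot : Pc.eval r = 0 := (Polynomial.mem_roots hPc0).mp hr
    have haev : Polynomial.aeval r P = 0 := by
      rw [Polynomial.aeval_def, ← Polynomial.eval_map]; exact hroot
    have him : r.im = 0 := matchPoly_root_real E haev
    refine ⟨him, ?_⟩
    have hre : P.eval r.re = 0 := by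
      have h1 : Pc.eval ((algebraMap ℝ ℂ) r.re) = (algebraMap ℝ ℂ) (P.eval r.re) := by
        rw [hPc, Polynomial.eval_map, Polynomial.eval₂_at_apply]
      have h2 : ((algebraMap ℝ ℂ) r.re) = r := by
        apply Complex.ext <;> simp [him]
      rw [h2, hroot] at h1
      exact hinj (by rw [← h1, map_zero])
    by_contra hge
    push_neg at hge
    have := eval_ge_one E hge
    rw [hre] at this
    linarith
  refine ⟨Pc.roots.map Complex.re, ?_, ?_⟩
  · intro r hr
    obtain ⟨sr, hs, rfl⟩ := Multiset.mem_map.mp hr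
    exact (hroots_real sr hs).2
  · apply Polynomial.map_injective (algebraMap ℝ ℂ) hinj
    rw [Polynomial.map_mul, Polynomial.map_C, ← hPc]
    have hlc : (algebraMap ℝ ℂ) (matchPoly E).leadingCoeff = Pc.leadingCoeff :=
      (Polynomial.leadingCoeff_map_of_injective hinj _).symm
    rw [hlc]
    conv_lhs => rw [hfact]
    congr 1
    rw [← Polynomial.coe_mapRingHom, map_multiset_prod, Multiset.map_map, Multiset.map_map]
    refine congrArg Multiset.prod (Multiset.map_congr rfl fun r hr => ?_)
    have him := (hroots_real r hr).1
    simp only [Function.comp_apply, Polynomial.coe_mapRingHom, Polynomial.map_sub,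
      Polynomial.map_X, Polynomial.map_C]
    have hrr : ((algebraMap ℝ ℂ) r.re) = r := by
      apply Complex.ext <;> simp [him]
    rw [hrr]

/-- coefficient sequences of products of `(X - r)` with `r < 0`, scaled by a
positive constant: positive up to `d`, zero above, log-concave. -/
def Good (g : ℕ → ℝ) (d : ℕ) : Prop :=
  (∀ k ≤ d, 0 < g k) ∧ (∀ k, d < k → g k = 0) ∧ ∀ j, g j * g (j + 2) ≤ g (j + 1) ^ 2

lemma Good.nonneg {g : ℕ → ℝ} {d : ℕ} (h : Good g d) (k : ℕ) : 0 ≤ g k := by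
  rcases le_or_gt k d with hk | hk
  · exact le_of_lt (h.1 k hk)
  · rw [h.2.1 k hk]

lemma good_C {c : ℝ} (hc : 0 < c) : Good (fun k => (Polynomial.C c).coeff k) 0 := by
  refine ⟨fun k hk => ?_, fun k hk => ?_, fun j => ?_⟩ <;>
    simp only [Polynomial.coeff_C]
  · interval_cases k; simpa using hc
  · rw [if_neg (by omega)]
  · rw [if_neg (show ¬ j + 1 = 0 by omega), if_neg (show ¬ j + 2 = 0 by omega)]
    simp

lemma good_cross {g : ℕ → ℝ} {d : ℕ} (h : Good g d) (i : ℕ) :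
    g i * g (i + 3) ≤ g (i + 1) * g (i + 2) := by
  rcases le_or_gt (i + 3) d with hd | hd
  · have p1 : 0 < g (i + 1) := h.1 _ (by omega)
    have p2 : 0 < g (i + 2) := h.1 _ (by omega)
    have l1 := h.2.2 i
    have l2 := h.2.2 (i + 1)
    have key : (g i * g (i + 3)) * (g (i + 1) * g (i + 2))
        ≤ (g (i + 1) * g (i + 2)) * (g (i + 1) * g (i + 2)) := by
      have := mul_le_mul l1 (by simpa [add_assoc] using l2)
        (mul_nonneg (h.nonneg (i+1)) (h.nonneg (i+3))) (sq_nonneg _)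
      nlinarith [this]
    exact le_of_mul_le_mul_right (by nlinarith [key]) (mul_pos p1 p2)
  · rw [h.2.1 (i + 3) hd, mul_zero]
    exact mul_nonneg (h.nonneg _) (h.nonneg _)

lemma good_step {q : Polynomial ℝ} {d : ℕ} (hq : Good q.coeff d) {r : ℝ} (hr : r < 0) :
    Good ((Polynomial.X - Polynomial.C r) * q).coeff (d + 1) := by
  set a : ℝ := -r with ha
  have ha0 : 0 < a := by simp [ha]; linarith
  have hc0 : ((Polynomial.X - Polynomial.C r) * q).coeff 0 = a * q.coeff 0 := by
    rw [Polynomial.mul_coeff_zero]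
    simp [ha]
  have hcS : ∀ n : ℕ, ((Polynomial.X - Polynomial.C r) * q).coeff (n + 1)
      = q.coeff n + a * q.coeff (n + 1) := by
    intro n
    rw [sub_mul, Polynomial.coeff_sub, Polynomial.coeff_X_mul, Polynomial.coeff_C_mul]
    rw [ha]
    ring
  set g := q.coeff
  refine ⟨?_, ?_, ?_⟩
  · intro k hk
    rcases k with _ | n
    · rw [hc0]
      exact mul_pos ha0 (hq.1 0 (by omega))
    · rw [hcS]
      have h1 : 0 < g n := hq.1 n (by omega)
      have h2 : 0 ≤ g (n + 1) := hq.nonneg (n + 1)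
      nlinarith
  · intro k hk
    rcases k with _ | n
    · omega
    · rw [hcS, hq.2.1 n (by omega), hq.2.1 (n + 1) (by omega)]
      ring
  · intro j
    rcases j with _ | i
    · rw [hc0, hcS, hcS]
      have l0 := hq.2.2 0
      have n0 := hq.nonneg 0
      have n1 := hq.nonneg 1
      have n2 := hq.nonneg 2
      norm_num
      nlinarith [mul_le_mul_of_nonneg_left l0 (mul_nonneg ha0.le ha0.le),
        mul_nonneg (mul_nonneg ha0.le n0) n1, sq_nonneg (g 0)]
    · rw [hcS, hcS, hcS]
      have l1 := hq.2.2 (i + 1)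
      have l0 := hq.2.2 i
      have cr := good_cross hq i
      have n0 := hq.nonneg i
      have n1 := hq.nonneg (i + 1)
      have n2 := hq.nonneg (i + 2)
      have n3 := hq.nonneg (i + 3)
      have e1 : i + 1 + 1 = i + 2 := by omega
      have e2 : i + 1 + 2 = i + 3 := by omega
      rw [e1, e2] at *
      nlinarith [l0, mul_le_mul_of_nonneg_left cr ha0.le,
        mul_le_mul_of_nonneg_left l1 (mul_nonneg ha0.le ha0.le)]

lemma good_prod (c : ℝ) (hc : 0 < c) :
    ∀ mm : Multiset ℝ, (∀ r ∈ mm, r < 0) →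
      Good ((Polynomial.C c * (mm.map (fun a => Polynomial.X - Polynomial.C a)).prod).coeff)
        mm.card := by
  intro mm
  induction mm using Multiset.induction_on with
  | empty => intro _; simpa using good_C hc
  | cons r mm IH =>
    intro hneg
    have heq : Polynomial.C c * ((r ::ₘ mm).map (fun a => Polynomial.X - Polynomial.C a)).prod
        = (Polynomial.X - Polynomial.C r) *
          (Polynomial.C c * (mm.map (fun a => Polynomial.X - Polynomial.C a)).prod) := by
      rw [Multiset.map_cons, Multiset.prod_cons]
      ring
    rw [heq, Multiset.card_cons]
    exact good_step (IH (fun s hs => hneg s (Multiset.mem_cons_of_mem hs)))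
      (hneg r (Multiset.mem_cons_self r mm))

lemma chain_mono {g : ℕ → ℝ} : ∀ a b : ℕ, a ≤ b →
    (∀ j, a ≤ j → j < b → g j ≤ g (j + 1)) → g a ≤ g b := by
  intro a b
  induction b with
  | zero => intro h _; obtain rfl : a = 0 := Nat.le_zero.mp h; exact le_refl _
  | succ n IH =>
    intro hab hstep
    rcases Nat.lt_or_ge a (n + 1) with h | h
    · exact le_trans (IH (by omega) (fun j hj hj2 => hstep j hj (by omega)))
        (hstep n (by omega) (by omega))
    · obtain rfl : a = n + 1 := by omega
      exact le_refl _

lemma good_up {g : ℕ → ℝ} {d p : ℕ} (h : Good g d) (hp : p ≤ d)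
    (hmax : ∀ j, j ≤ d → g j ≤ g p) {k : ℕ} (hk : k < p) : g k ≤ g (k + 1) := by
  by_contra hlt
  push_neg at hlt
  have hgk : 0 < g k := h.1 k (by omega)
  have B : ∀ j, k ≤ j → g (j + 1) * g k ≤ g j * g (k + 1) := by
    intro j hj
    induction j, hj using Nat.le_induction with
    | base => rw [mul_comm]
    | succ j hj IH =>
      rcases le_or_gt (j + 1) d with hD | hD
      · have pj : 0 < g j := h.1 j (by omega)
        have l0 := h.2.2 j
        have h1 : g j * g (j + 2) * g k ≤ g (j + 1) ^ 2 * g k :=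
          mul_le_mul_of_nonneg_right l0 (h.nonneg k)
        have h2 : g (j + 1) * (g (j + 1) * g k) ≤ g (j + 1) * (g j * g (k + 1)) :=
          mul_le_mul_of_nonneg_left IH (h.nonneg (j + 1))
        have h3 : g j * (g (j + 2) * g k) ≤ g j * (g (j + 1) * g (k + 1)) := by nlinarith
        have := le_of_mul_le_mul_left h3 pj
        calc g (j + 1 + 1) * g k = g (j + 2) * g k := by norm_num
          _ ≤ g (j + 1) * g (k + 1) := this
      · rw [h.2.1 (j + 1 + 1) (by omega), zero_mul]
        exact mul_nonneg (h.nonneg _) (h.nonneg _)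
  have C : ∀ j, k ≤ j → g (j + 1) ≤ g j := by
    intro j hj
    have h1 := B j hj
    have h2 : g j * g (k + 1) ≤ g j * g k :=
      mul_le_mul_of_nonneg_left (le_of_lt hlt) (h.nonneg j)
    exact le_of_mul_le_mul_right (le_trans h1 h2) hgk
  have hchain : g p ≤ g (k + 1) := by
    have : ∀ j, k + 1 ≤ j → g j ≤ g (k + 1) := by
      intro j hj
      induction j, hj using Nat.le_induction with
      | base => exact le_refl _
      | succ j hj IH => exact le_trans (C j (by omega)) IH
    exact this p (by omega)
  have := hmax k (by omega)
  linarith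

lemma good_down {g : ℕ → ℝ} {d p : ℕ} (h : Good g d) (hp : p ≤ d)
    (hmax : ∀ j, j ≤ d → g j ≤ g p) {k : ℕ} (hk : p ≤ k) : g (k + 1) ≤ g k := by
  rcases le_or_gt d k with hD | hD
  · rw [h.2.1 (k + 1) (by omega)]
    exact h.nonneg k
  · by_contra hlt
    push_neg at hlt
    have hk1 : k + 1 ≤ d := by omega
    have B : ∀ t j, j + t = k → g j * g (k + 1) ≤ g (j + 1) * g k := by
      intro t
      induction t with
      | zero =>
        intro j hj
        obtain rfl : j = k := by omega
        exact le_of_eq (mul_comm _ _)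
      | succ t IH =>
        intro j hj
        have IH' := IH (j + 1) (by omega)
        have pj2 : 0 < g (j + 2) := h.1 _ (by omega)
        have l0 := h.2.2 j
        have h2 : g (j + 1) ^ 2 * g (k + 1) ≤ g (j + 1) * (g (j + 2) * g k) := by
          nlinarith [mul_le_mul_of_nonneg_left IH' (h.nonneg (j + 1))]
        have h3 : g j * g (j + 2) * g (k + 1) ≤ g (j + 1) ^ 2 * g (k + 1) :=
          mul_le_mul_of_nonneg_right l0 (h.nonneg (k + 1))
        have h4 : g (j + 2) * (g j * g (k + 1)) ≤ g (j + 2) * (g (j + 1) * g k) := by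
          nlinarith
        exact le_of_mul_le_mul_left h4 pj2
    have C : ∀ j, j ≤ k → g j < g (j + 1) := by
      intro j hj
      have h1 := B (k - j) j (by omega)
      have pj1 : 0 < g (j + 1) := h.1 _ (by omega)
      have pk1 : 0 < g (k + 1) := h.1 _ (by omega)
      have h2 : g (j + 1) * g k < g (j + 1) * g (k + 1) :=
        mul_lt_mul_of_pos_left hlt pj1
      have := lt_of_le_of_lt h1 h2
      exact lt_of_mul_lt_mul_right this (le_of_lt pk1)
    have hchain : g p ≤ g k :=
      chain_mono p k hk (fun j hj hj2 => le_of_lt (C j (by omega)))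
    have := hmax (k + 1) hk1
    linarith

/-- The matching polynomial of `W(H)` is real-rooted; hence its coefficient
sequence is log-concave and unimodal. -/
theorem matching_poly_real_rooted (n m : ℕ) (hn : 1 ≤ n) (hm : 1 ≤ m) (E : Finset (ℕ × ℕ))
    (hE : ∀ p ∈ E, 1 ≤ p.1 ∧ p.1 ≤ n ∧ 1 ≤ p.2 ∧ p.2 ≤ m)
    (hdegS : ∀ i ∈ Finset.Icc 1 n, 2 ≤ (Nbr E i).card)
    (hdegT : ∀ j ∈ Finset.Icc 1 m, 2 ≤ (Nbr' E j).card)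
    (hconn : HConnected n m E) :
    (∀ z : ℂ, Polynomial.aeval z (matchPoly E) = 0 → z.im = 0) ∧
    (∀ k : ℕ, 1 ≤ k → mCount E (k - 1) * mCount E (k + 1) ≤ mCount E k * mCount E k) ∧
    (∃ p : ℕ, (∀ a b : ℕ, a ≤ b → b ≤ p → mCount E a ≤ mCount E b) ∧
      (∀ a b : ℕ, p ≤ a → a ≤ b → mCount E b ≤ mCount E a)) := by
  classical
  obtain ⟨mm, hneg, hfac⟩ := exists_prod E
  set g : ℕ → ℝ := fun k => ((mCount E k : ℝ)) with hgdef
  have hgood : Good g mm.card := by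
    have h := good_prod (matchPoly E).leadingCoeff (lc_pos E) mm hneg
    rw [← hfac] at h
    rwa [show (matchPoly E).coeff = g from funext (coeff_matchPoly E)] at h
  refine ⟨fun z hz => matchPoly_root_real E hz, ?_, ?_⟩
  · intro k hk
    obtain ⟨j, rfl⟩ : ∃ j, k = j + 1 := ⟨k - 1, by omega⟩
    have h := hgood.2.2 j
    rw [sq] at h
    have h2 : mCount E j * mCount E (j + 2) ≤ mCount E (j + 1) * mCount E (j + 1) := by
      simp only [hgdef] at h
      exact_mod_cast h
    simpa using h2
  · obtain ⟨p, hpmem, hpmax⟩ := Finset.exists_max_image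
      (Finset.range (mm.card + 1)) (fun k => (mCount E k : ℝ)) ⟨0, by simp⟩
    have hpD : p ≤ mm.card := by
      have := Finset.mem_range.mp hpmem; omega
    have hmax : ∀ j, j ≤ mm.card → g j ≤ g p := fun j hj =>
      hpmax j (Finset.mem_range.mpr (by omega))
    refine ⟨p, ?_, ?_⟩
    · intro a b hab hbp
      have h1 : g a ≤ g b := chain_mono a b hab
        (fun j hj hj2 => good_up hgood hpD hmax (by omega))
      simp only [hgdef] at h1
      exact_mod_cast h1
    · intro a b hpa hab
      have h1 : (fun k => -(g k)) a ≤ (fun k => -(g k)) b :=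
        chain_mono (g := fun k => -(g k)) a b hab
          (fun j hj _ => neg_le_neg (good_down hgood hpD hmax (le_trans hpa hj)))
      have h2 : g b ≤ g a := by simpa using h1
      simp only [hgdef] at h2
      exact_mod_cast h2
end

section
/- The clique map φ is a bijection from the set of clique vectors for H onto the set of maximal cliques of routes of G(H) with respect to the canonical bipartite framing. In particular, for every clique vector v, the set of routes φ(v) is a maximal clique. -/
open Finset Filter Pointwise

/-- A route of `G(H)`: a triple `(a, (i,j), c)` with `a, c ∈ {1,2}`, `(i,j) ∈ E`,
representing the path `α_{a,i} β_{i,j} γ_{j,c}`. -/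
abbrev Route : Type := ℕ × (ℕ × ℕ) × ℕ

def IsRoute (E : Finset (ℕ × ℕ)) (r : Route) : Prop :=
  (r.1 = 1 ∨ r.1 = 2) ∧ r.2.1 ∈ E ∧ (r.2.2 = 1 ∨ r.2.2 = 2)

/-- Two routes are in conflict with respect to the canonical bipartite framing. -/
def Conflict (r r' : Route) : Prop :=
  (r.2.1 = r'.2.1 ∧
    ((r.1 = 1 ∧ r.2.2 = 2 ∧ r'.1 = 2 ∧ r'.2.2 = 1) ∨
     (r.1 = 2 ∧ r.2.2 = 1 ∧ r'.1 = 1 ∧ r'.2.2 = 2))) ∨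
  (r.2.1.1 = r'.2.1.1 ∧ r.2.1.2 ≠ r'.2.1.2 ∧
    ((r.2.1.2 < r'.2.1.2 ∧ r'.1 = 1 ∧ r.1 = 2) ∨
     (r'.2.1.2 < r.2.1.2 ∧ r.1 = 1 ∧ r'.1 = 2))) ∨
  (r.2.1.2 = r'.2.1.2 ∧ r.2.1.1 ≠ r'.2.1.1 ∧
    ((r.2.1.1 < r'.2.1.1 ∧ r.2.2 = 2 ∧ r'.2.2 = 1) ∨
     (r'.2.1.1 < r.2.1.1 ∧ r'.2.2 = 2 ∧ r.2.2 = 1)))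

/-- A clique: a set of pairwise coherent routes. -/
def IsClique (E : Finset (ℕ × ℕ)) (C : Set Route) : Prop :=
  (∀ r ∈ C, IsRoute E r) ∧ ∀ r ∈ C, ∀ r' ∈ C, r ≠ r' → ¬ Conflict r r'

/-- A maximal clique of routes. -/
def IsMaxClique (E : Finset (ℕ × ℕ)) (C : Set Route) : Prop :=
  IsClique E C ∧ ∀ C' : Set Route, IsClique E C' → C ⊆ C' → C' = C

/-- A clique vector `(f, g, s)` for the bipartite graph `H`; values outside the
domains are normalized (to `0`, resp. `false`). -/
structure CliqueVec (n m : ℕ) (E : Finset (ℕ × ℕ)) where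
  f : ℕ → ℕ
  g : ℕ → ℕ
  s : ℕ × ℕ → Bool
  hf : ∀ i ∈ Finset.Icc 1 n, (i, f i) ∈ E
  hg : ∀ j ∈ Finset.Icc 1 m, (g j, j) ∈ E
  hs : ∀ p ∈ E, s p = true → f p.1 = p.2 ∧ g p.2 = p.1
  hf' : ∀ i ∉ Finset.Icc 1 n, f i = 0
  hg' : ∀ j ∉ Finset.Icc 1 m, g j = 0
  hs' : ∀ p ∉ E, s p = false

/-- The clique map `φ`. -/
def phi {n m : ℕ} {E : Finset (ℕ × ℕ)} (v : CliqueVec n m E) : Set Route :=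
  { r | ∃ a i j c : ℕ, r = (a, (i, j), c) ∧ (i, j) ∈ E ∧
    ((v.f i ≠ j ∧ v.g j ≠ i ∧
        a = (if v.f i < j then 2 else 1) ∧ c = (if v.g j < i then 2 else 1)) ∨
     (v.f i = j ∧ v.g j ≠ i ∧ (a = 1 ∨ a = 2) ∧ c = (if v.g j < i then 2 else 1)) ∨
     (v.g j = i ∧ v.f i ≠ j ∧ a = (if v.f i < j then 2 else 1) ∧ (c = 1 ∨ c = 2)) ∨
     (v.f i = j ∧ v.g j = i ∧ v.s (i, j) = false ∧
        ((a = 1 ∧ c = 1) ∨ (a = 1 ∧ c = 2) ∨ (a = 2 ∧ c = 2))) ∨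
     (v.f i = j ∧ v.g j = i ∧ v.s (i, j) = true ∧
        ((a = 1 ∧ c = 1) ∨ (a = 2 ∧ c = 1) ∨ (a = 2 ∧ c = 2)))) }


section Helpers

lemma conflict_comm {r r' : Route} : Conflict r r' ↔ Conflict r' r := by
  constructor <;> rintro (⟨h1, h2⟩ | ⟨h1, h2, h3⟩ | ⟨h1, h2, h3⟩)
  · exact Or.inl ⟨h1.symm, by tauto⟩
  · exact Or.inr (Or.inl ⟨h1.symm, Ne.symm h2, by tauto⟩)
  · exact Or.inr (Or.inr ⟨h1.symm, Ne.symm h2, by tauto⟩)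
  · exact Or.inl ⟨h1.symm, by tauto⟩
  · exact Or.inr (Or.inl ⟨h1.symm, Ne.symm h2, by tauto⟩)
  · exact Or.inr (Or.inr ⟨h1.symm, Ne.symm h2, by tauto⟩)

lemma mem_phi_iff {n m : ℕ} {E : Finset (ℕ × ℕ)} (v : CliqueVec n m E) (a i j c : ℕ) :
    (a, (i, j), c) ∈ phi v ↔
      (i, j) ∈ E ∧ (a = 1 ∨ a = 2) ∧ (c = 1 ∨ c = 2) ∧
      (v.f i < j → a = 2) ∧ (j < v.f i → a = 1) ∧
      (v.g j < i → c = 2) ∧ (i < v.g j → c = 1) ∧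
      (v.f i = j → v.g j = i → v.s (i, j) = false → ¬(a = 2 ∧ c = 1)) ∧
      (v.f i = j → v.g j = i → v.s (i, j) = true → ¬(a = 1 ∧ c = 2)) := by
  constructor
  · rintro ⟨a', i', j', c', heq, hE, hcase⟩
    obtain ⟨rfl, ⟨rfl, rfl⟩, rfl⟩ : a = a' ∧ (i = i' ∧ j = j') ∧ c = c' := by
      simpa [Prod.ext_iff] using heq
    refine ⟨hE, ?_⟩
    rcases hcase with ⟨h1, h2, h3, h4⟩ | ⟨h1, h2, h3, h4⟩ | ⟨h1, h2, h3, h4⟩ |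
      ⟨h1, h2, h3, h4⟩ | ⟨h1, h2, h3, h4⟩
    · split_ifs at h3 h4 <;>
        exact ⟨by omega, by omega, by omega, by omega, by omega, by omega,
          fun hf' => absurd hf' h1, fun hf' => absurd hf' h1⟩
    · split_ifs at h4 <;>
        exact ⟨h3, by omega, by omega, by omega, by omega, by omega,
          fun _ hg' => absurd hg' h2, fun _ hg' => absurd hg' h2⟩
    · split_ifs at h3 <;>
        exact ⟨by omega, h4, by omega, by omega, by omega, by omega,
          fun hf' => absurd hf' h2, fun hf' => absurd hf' h2⟩
    · exact ⟨by omega, by omega, by omega, by omega, by omega, by omega,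
        fun _ _ _ => by omega,
        fun _ _ hs => by simp [hs] at h3⟩
    · exact ⟨by omega, by omega, by omega, by omega, by omega, by omega,
        fun _ _ hs => by simp [hs] at h3,
        fun _ _ _ => by omega⟩
  · rintro ⟨hE, ha, hc, h1, h2, h3, h4, h5, h6⟩
    refine ⟨a, i, j, c, rfl, hE, ?_⟩
    rcases lt_trichotomy (v.f i) j with hf | hf | hf <;>
      rcases lt_trichotomy (v.g j) i with hg | hg | hg
    · exact Or.inl ⟨hf.ne, hg.ne, by rw [if_pos hf]; exact h1 hf,
        by rw [if_pos hg]; exact h3 hg⟩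
    · exact Or.inr (Or.inr (Or.inl ⟨hg, hf.ne, by rw [if_pos hf]; exact h1 hf, hc⟩))
    · exact Or.inl ⟨hf.ne, hg.ne', by rw [if_pos hf]; exact h1 hf,
        by rw [if_neg (not_lt.2 hg.le)]; exact h4 hg⟩
    · exact Or.inr (Or.inl ⟨hf, hg.ne, ha, by rw [if_pos hg]; exact h3 hg⟩)
    · cases hs : v.s (i, j) with
      | false =>
          refine Or.inr (Or.inr (Or.inr (Or.inl ⟨hf, hg, rfl, ?_⟩)))
          have := h5 hf hg hs
          omega
      | true =>
          refine Or.inr (Or.inr (Or.inr (Or.inr ⟨hf, hg, rfl, ?_⟩)))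
          have := h6 hf hg hs
          omega
    · exact Or.inr (Or.inl ⟨hf, hg.ne', ha, by rw [if_neg (not_lt.2 hg.le)]; exact h4 hg⟩)
    · exact Or.inl ⟨hf.ne', hg.ne, by rw [if_neg (not_lt.2 hf.le)]; exact h2 hf,
        by rw [if_pos hg]; exact h3 hg⟩
    · exact Or.inr (Or.inr (Or.inl ⟨hg, hf.ne', by rw [if_neg (not_lt.2 hf.le)]; exact h2 hf, hc⟩))
    · exact Or.inl ⟨hf.ne', hg.ne', by rw [if_neg (not_lt.2 hf.le)]; exact h2 hf,
        by rw [if_neg (not_lt.2 hg.le)]; exact h4 hg⟩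
lemma conflict_irrefl (r : Route) : ¬ Conflict r r := by
  rintro (⟨-, h⟩ | ⟨-, h, -⟩ | ⟨-, h, -⟩)
  · omega
  · exact h rfl
  · exact h rfl

lemma clique_no_conflict {E : Finset (ℕ × ℕ)} {C : Set Route} (hC : IsClique E C)
    {r r' : Route} (h1 : r ∈ C) (h2 : r' ∈ C) : ¬ Conflict r r' := by
  rcases eq_or_ne r r' with rfl | hne
  · exact conflict_irrefl r
  · exact hC.2 r h1 r' h2 hne

lemma coh_a {E : Finset (ℕ × ℕ)} {C : Set Route} (hC : IsClique E C)
    {a1 a2 i j1 j2 c1 c2 : ℕ} (h1 : (a1, (i, j1), c1) ∈ C) (h2 : (a2, (i, j2), c2) ∈ C)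
    (hj : j1 < j2) (ha1 : a1 = 2) (ha2 : a2 = 1) : False :=
  clique_no_conflict hC h1 h2 (Or.inr (Or.inl ⟨rfl, hj.ne, Or.inl ⟨hj, ha2, ha1⟩⟩))

lemma coh_k {E : Finset (ℕ × ℕ)} {C : Set Route} (hC : IsClique E C)
    {a1 a2 i1 i2 j c1 c2 : ℕ} (h1 : (a1, (i1, j), c1) ∈ C) (h2 : (a2, (i2, j), c2) ∈ C)
    (hi : i1 < i2) (hc1 : c1 = 2) (hc2 : c2 = 1) : False :=
  clique_no_conflict hC h1 h2 (Or.inr (Or.inr ⟨rfl, hi.ne, Or.inl ⟨hi, hc1, hc2⟩⟩))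

lemma coh_e {E : Finset (ℕ × ℕ)} {C : Set Route} (hC : IsClique E C)
    {i j : ℕ} (h1 : (1, (i, j), 2) ∈ C) (h2 : (2, (i, j), 1) ∈ C) : False :=
  clique_no_conflict hC h1 h2 (Or.inl ⟨rfl, Or.inl ⟨rfl, rfl, rfl, rfl⟩⟩)

lemma maximal_mem {E : Finset (ℕ × ℕ)} {C : Set Route} (hC : IsMaxClique E C)
    {r : Route} (hr : IsRoute E r) (h : ∀ r' ∈ C, ¬ Conflict r r') : r ∈ C := by
  have h' : IsClique E (insert r C) := by
    constructor
    · intro x hx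
      rcases Set.mem_insert_iff.mp hx with rfl | hx
      · exact hr
      · exact hC.1.1 x hx
    · intro x hx y hy hne
      rcases Set.mem_insert_iff.mp hx with hx' | hx'
      · rcases Set.mem_insert_iff.mp hy with hy' | hy'
        · subst hx'; subst hy'; exact absurd rfl hne
        · subst hx'; exact h y hy'
      · rcases Set.mem_insert_iff.mp hy with hy' | hy'
        · subst hy'; exact fun hc => h x hx' (conflict_comm.mp hc)
        · exact hC.1.2 x hx' y hy' hne
  have heq := hC.2 _ h' (Set.subset_insert r C)
  rw [← heq]
  exact Set.mem_insert r C

lemma conflict_of_not_mem {E : Finset (ℕ × ℕ)} {C : Set Route} (hC : IsMaxClique E C)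
    {r : Route} (hr : IsRoute E r) (hne : r ∉ C) : ∃ r' ∈ C, Conflict r r' := by
  by_contra h
  push_neg at h
  exact hne (maximal_mem hC hr h)

section Partners

variable {n m : ℕ} {E : Finset (ℕ × ℕ)} (v : CliqueVec n m E)

lemma phi_has_a1 {i : ℕ} (hi : i ∈ Finset.Icc 1 n) :
    (1, (i, v.f i), if v.g (v.f i) < i then 2 else 1) ∈ phi v := by
  rw [mem_phi_iff]
  refine ⟨v.hf i hi, by omega, by split_ifs <;> omega, by omega, by omega, ?_, ?_, ?_, ?_⟩
  · intro h; rw [if_pos h]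
  · intro h; rw [if_neg (by omega)]
  · intro _ _ _; omega
  · intro _ hg _; rw [if_neg (by omega)]; omega

lemma phi_has_a2 {i : ℕ} (hi : i ∈ Finset.Icc 1 n) :
    (2, (i, v.f i), if i < v.g (v.f i) then 1 else 2) ∈ phi v := by
  rw [mem_phi_iff]
  refine ⟨v.hf i hi, by omega, by split_ifs <;> omega, by omega, by omega, ?_, ?_, ?_, ?_⟩
  · intro h; rw [if_neg (by omega)]
  · intro h; rw [if_pos h]
  · intro _ hg _; rw [if_neg (by omega)]; omega
  · intro _ _ _; omega

lemma phi_has_c1 {j : ℕ} (hj : j ∈ Finset.Icc 1 m) :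
    ((if v.f (v.g j) < j then 2 else 1), (v.g j, j), 1) ∈ phi v := by
  rw [mem_phi_iff]
  refine ⟨v.hg j hj, by split_ifs <;> omega, by omega, ?_, ?_, by omega, by omega, ?_, ?_⟩
  · intro h; rw [if_pos h]
  · intro h; rw [if_neg (by omega)]
  · intro hf _ _; rw [if_neg (by omega)]; omega
  · intro _ _ _; omega

lemma phi_has_c2 {j : ℕ} (hj : j ∈ Finset.Icc 1 m) :
    ((if j < v.f (v.g j) then 1 else 2), (v.g j, j), 2) ∈ phi v := by
  rw [mem_phi_iff]
  refine ⟨v.hg j hj, by split_ifs <;> omega, by omega, ?_, ?_, by omega, by omega, ?_, ?_⟩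
  · intro h; rw [if_neg (by omega)]
  · intro h; rw [if_pos h]
  · intro _ _ _; omega
  · intro hf _ _; rw [if_neg (by omega)]; omega

end Partners

lemma phi_isClique {n m : ℕ} {E : Finset (ℕ × ℕ)} (v : CliqueVec n m E) :
    IsClique E (phi v) := by
  constructor
  · rintro ⟨a, ⟨i, j⟩, c⟩ hr
    rw [mem_phi_iff] at hr
    exact ⟨hr.2.1, hr.1, hr.2.2.1⟩
  · rintro ⟨a, ⟨i, j⟩, c⟩ hr ⟨a', ⟨i', j'⟩, c'⟩ hr' hne hconf
    rw [mem_phi_iff] at hr hr'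
    obtain ⟨-, -, -, f1, f2, f3, f4, f5, f6⟩ := hr
    obtain ⟨-, -, -, g1, g2, g3, g4, g5, g6⟩ := hr'
    simp only [Conflict, Prod.mk.injEq] at hconf
    rcases hconf with ⟨⟨rfl, rfl⟩, h2⟩ | ⟨rfl, h2, h3⟩ | ⟨rfl, h2, h3⟩
    · have hfj : v.f i = j := by omega
      have hgi : v.g j = i := by omega
      cases hsv : v.s (i, j) with
      | false =>
          have := f5 hfj hgi hsv; have := g5 hfj hgi hsv; omega
      | true =>
          have := f6 hfj hgi hsv; have := g6 hfj hgi hsv; omega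
    · clear hne f3 f4 f5 f6 g3 g4 g5 g6
      omega
    · clear hne f1 f2 f5 f6 g1 g2 g5 g6
      omega

lemma phi_isMaxClique {n m : ℕ} {E : Finset (ℕ × ℕ)}
    (hE : ∀ p ∈ E, 1 ≤ p.1 ∧ p.1 ≤ n ∧ 1 ≤ p.2 ∧ p.2 ≤ m)
    (v : CliqueVec n m E) : IsMaxClique E (phi v) := by
  refine ⟨phi_isClique v, fun C' hC' hsub => ?_⟩
  apply Set.eq_of_subset_of_subset _ hsub
  rintro ⟨a, ⟨i, j⟩, c⟩ hr
  by_contra hnot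
  obtain ⟨ha, hEij, hc⟩ := hC'.1 _ hr
  dsimp only at ha hEij hc
  have hiI : i ∈ Finset.Icc 1 n := by
    have := hE _ hEij; simp only [Finset.mem_Icc]; omega
  have hjI : j ∈ Finset.Icc 1 m := by
    have := hE _ hEij; simp only [Finset.mem_Icc]; omega
  by_cases hq1 : v.f i < j ∧ a = 1
  · exact clique_no_conflict hC' hr (hsub (phi_has_a2 v hiI))
      (Or.inr (Or.inl ⟨rfl, (Nat.ne_of_lt hq1.1).symm, Or.inr ⟨hq1.1, hq1.2, rfl⟩⟩))
  by_cases hq2 : j < v.f i ∧ a = 2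
  · exact clique_no_conflict hC' hr (hsub (phi_has_a1 v hiI))
      (Or.inr (Or.inl ⟨rfl, Nat.ne_of_lt hq2.1, Or.inl ⟨hq2.1, rfl, hq2.2⟩⟩))
  by_cases hq3 : v.g j < i ∧ c = 1
  · exact clique_no_conflict hC' hr (hsub (phi_has_c2 v hjI))
      (Or.inr (Or.inr ⟨rfl, (Nat.ne_of_lt hq3.1).symm, Or.inr ⟨hq3.1, rfl, hq3.2⟩⟩))
  by_cases hq4 : i < v.g j ∧ c = 2
  · exact clique_no_conflict hC' hr (hsub (phi_has_c1 v hjI))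
      (Or.inr (Or.inr ⟨rfl, Nat.ne_of_lt hq4.1, Or.inl ⟨hq4.1, hq4.2, rfl⟩⟩))
  by_cases hq5 : v.f i = j ∧ v.g j = i ∧ v.s (i, j) = false ∧ a = 2 ∧ c = 1
  · obtain ⟨hfj, hgi, hs, ha2, hc1⟩ := hq5
    have hmem : ((1 : ℕ), (i, j), (2 : ℕ)) ∈ phi v := by
      rw [mem_phi_iff]
      exact ⟨hEij, by omega, by omega, by omega, by omega, by omega, by omega,
        fun _ _ _ => by omega, fun _ _ hs' => by simp [hs'] at hs⟩
    exact clique_no_conflict hC' hr (hsub hmem)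
      (Or.inl ⟨rfl, Or.inr ⟨ha2, hc1, rfl, rfl⟩⟩)
  by_cases hq6 : v.f i = j ∧ v.g j = i ∧ v.s (i, j) = true ∧ a = 1 ∧ c = 2
  · obtain ⟨hfj, hgi, hs, ha1, hc2⟩ := hq6
    have hmem : ((2 : ℕ), (i, j), (1 : ℕ)) ∈ phi v := by
      rw [mem_phi_iff]
      exact ⟨hEij, by omega, by omega, by omega, by omega, by omega, by omega,
        fun _ _ hs' => by simp [hs'] at hs, fun _ _ _ => by omega⟩
    exact clique_no_conflict hC' hr (hsub hmem)
      (Or.inl ⟨rfl, Or.inl ⟨ha1, hc2, rfl, rfl⟩⟩)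
  apply hnot
  rw [mem_phi_iff]
  refine ⟨hEij, ha, hc, by omega, by omega, by omega, by omega, ?_, ?_⟩
  · intro hfj hgi hs hac
    exact hq5 ⟨hfj, hgi, hs, hac.1, hac.2⟩
  · intro hfj hgi hs hac
    exact hq6 ⟨hfj, hgi, hs, hac.1, hac.2⟩
lemma phi_injective {n m : ℕ} {E : Finset (ℕ × ℕ)} :
    Function.Injective (phi : CliqueVec n m E → Set Route) := by
  intro v w h
  have hf : v.f = w.f := by
    funext i
    by_cases hi : i ∈ Finset.Icc 1 n
    · have h1 := phi_has_a1 v hi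
      have h2 := phi_has_a2 v hi
      rw [h, mem_phi_iff] at h1 h2
      have A := h1.2.2.2.1
      have B := h2.2.2.2.2.1
      omega
    · rw [v.hf' i hi, w.hf' i hi]
  have hg : v.g = w.g := by
    funext j
    by_cases hj : j ∈ Finset.Icc 1 m
    · have h1 := phi_has_c1 v hj
      have h2 := phi_has_c2 v hj
      rw [h, mem_phi_iff] at h1 h2
      have A := h1.2.2.2.2.2.1
      have B := h2.2.2.2.2.2.2.1
      omega
    · rw [v.hg' j hj, w.hg' j hj]
  have hs : v.s = w.s := by
    funext p
    obtain ⟨i, j⟩ := p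
    by_cases hp : (i, j) ∈ E
    · by_cases hd : v.f i = j ∧ v.g j = i
      · have hwf : w.f i = j := hf ▸ hd.1
        have hwg : w.g j = i := hg ▸ hd.2
        cases hv : v.s (i, j) with
        | false =>
            cases hw : w.s (i, j) with
            | false => rfl
            | true =>
                exfalso
                have hmem : ((2 : ℕ), (i, j), (1 : ℕ)) ∈ phi w := by
                  rw [mem_phi_iff]
                  exact ⟨hp, by omega, by omega, by omega, by omega, by omega, by omega,
                    fun _ _ hs' => by simp [hs'] at hw, fun _ _ _ => by omega⟩
                rw [← h, mem_phi_iff] at hmem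
                exact hmem.2.2.2.2.2.2.2.1 hd.1 hd.2 hv ⟨rfl, rfl⟩
        | true =>
            cases hw : w.s (i, j) with
            | true => rfl
            | false =>
                exfalso
                have hmem : ((2 : ℕ), (i, j), (1 : ℕ)) ∈ phi v := by
                  rw [mem_phi_iff]
                  exact ⟨hp, by omega, by omega, by omega, by omega, by omega, by omega,
                    fun _ _ hs' => by simp [hs'] at hv, fun _ _ _ => by omega⟩
                rw [h, mem_phi_iff] at hmem
                exact hmem.2.2.2.2.2.2.2.1 hwf hwg hw ⟨rfl, rfl⟩
      · have hv : v.s (i, j) = false := by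
          cases hvs : v.s (i, j) with
          | false => rfl
          | true => exact absurd (v.hs _ hp hvs) hd
        have hw : w.s (i, j) = false := by
          cases hws : w.s (i, j) with
          | false => rfl
          | true =>
              exfalso
              apply hd
              have := w.hs _ hp hws
              exact ⟨hf ▸ this.1, hg ▸ this.2⟩
        rw [hv, hw]
    · rw [v.hs' _ hp, w.hs' _ hp]
  obtain ⟨vf, vg, vs, _, _, _, _, _, _⟩ := v
  obtain ⟨wf, wg, ws, _, _, _, _, _, _⟩ := w
  simp only at hf hg hs
  subst hf; subst hg; subst hs
  rfl
lemma conflict_cases {E : Finset (ℕ × ℕ)} {C : Set Route} (hC : IsMaxClique E C)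
    {a i j c : ℕ} (hij : (i, j) ∈ E) (ha : a = 1 ∨ a = 2) (hc : c = 1 ∨ c = 2)
    (hnm : (a, (i, j), c) ∉ C) :
    (∃ a' c', (a', (i, j), c') ∈ C ∧
      ((a = 1 ∧ c = 2 ∧ a' = 2 ∧ c' = 1) ∨ (a = 2 ∧ c = 1 ∧ a' = 1 ∧ c' = 2))) ∨
    (∃ j' a' c', j' ≠ j ∧ (a', (i, j'), c') ∈ C ∧
      ((j < j' ∧ a' = 1 ∧ a = 2) ∨ (j' < j ∧ a = 1 ∧ a' = 2))) ∨
    (∃ i' a' c', i' ≠ i ∧ (a', (i', j), c') ∈ C ∧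
      ((i < i' ∧ c = 2 ∧ c' = 1) ∨ (i' < i ∧ c' = 2 ∧ c = 1))) := by
  obtain ⟨r', hr'C, hc'⟩ := conflict_of_not_mem hC ⟨ha, hij, hc⟩ hnm
  obtain ⟨a', ⟨i', j'⟩, c'⟩ := r'
  rcases hc' with ⟨h1, h2⟩ | ⟨h1, h2, h3⟩ | ⟨h1, h2, h3⟩
  · obtain ⟨rfl, rfl⟩ : i = i' ∧ j = j' := by simpa [Prod.ext_iff] using h1
    exact Or.inl ⟨a', c', hr'C, h2⟩
  · have h1' : i = i' := h1
    subst h1'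
    exact Or.inr (Or.inl ⟨j', a', c', Ne.symm h2, hr'C, h3⟩)
  · have h1' : j = j' := h1
    subst h1'
    exact Or.inr (Or.inr ⟨i', a', c', Ne.symm h2, hr'C, h3⟩)

lemma edge_occupied {E : Finset (ℕ × ℕ)} {C : Set Route} (hC : IsMaxClique E C)
    {i j : ℕ} (hij : (i, j) ∈ E) : ∃ a c, (a, (i, j), c) ∈ C := by
  by_contra hno
  push_neg at hno
  have hKD : ∀ {j1 a1 c1 j2 a2 c2 : ℕ}, (a1, (i, j1), c1) ∈ C → (a2, (i, j2), c2) ∈ C →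
      j1 < j → j < j2 → a1 = 2 → a2 = 1 → False :=
    fun hm1 hm2 hj1 hj2 ha1 ha2 => coh_a hC.1 hm1 hm2 (hj1.trans hj2) ha1 ha2
  have hDD : ∀ {i1 a1 c1 i2 a2 c2 : ℕ}, (a1, (i1, j), c1) ∈ C → (a2, (i2, j), c2) ∈ C →
      i1 < i → i < i2 → c1 = 2 → c2 = 1 → False :=
    fun hm1 hm2 hi1 hi2 hc1 hc2 => coh_k hC.1 hm1 hm2 (hi1.trans hi2) hc1 hc2
  -- analyse the four candidate routes
  have P11 := conflict_cases hC hij (Or.inl rfl) (Or.inl rfl) (hno 1 1)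
  have P12 := conflict_cases hC hij (Or.inl rfl) (Or.inr rfl) (hno 1 2)
  have P21 := conflict_cases hC hij (Or.inr rfl) (Or.inl rfl) (hno 2 1)
  have P22 := conflict_cases hC hij (Or.inr rfl) (Or.inr rfl) (hno 2 2)
  -- reduce each to the useful disjunct
  have Q11 : (∃ j' a' c', j' < j ∧ a' = 2 ∧ (a', (i, j'), c') ∈ C) ∨
      (∃ i' a' c', i' < i ∧ c' = 2 ∧ (a', (i', j), c') ∈ C) := by
    rcases P11 with ⟨a', c', hm, hopt⟩ | ⟨j', a', c', hne', hm, hopt⟩ | ⟨i', a', c', hne', hm, hopt⟩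
    · omega
    · exact Or.inl ⟨j', a', c', by omega, by omega, hm⟩
    · exact Or.inr ⟨i', a', c', by omega, by omega, hm⟩
  have Q12 : (∃ j' a' c', j' < j ∧ a' = 2 ∧ (a', (i, j'), c') ∈ C) ∨
      (∃ i' a' c', i < i' ∧ c' = 1 ∧ (a', (i', j), c') ∈ C) := by
    rcases P12 with ⟨a', c', hm, hopt⟩ | ⟨j', a', c', hne', hm, hopt⟩ | ⟨i', a', c', hne', hm, hopt⟩
    · obtain ⟨rfl, rfl⟩ : a' = 2 ∧ c' = 1 := by omega
      exact absurd hm (hno 2 1)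
    · exact Or.inl ⟨j', a', c', by omega, by omega, hm⟩
    · exact Or.inr ⟨i', a', c', by omega, by omega, hm⟩
  have Q21 : (∃ j' a' c', j < j' ∧ a' = 1 ∧ (a', (i, j'), c') ∈ C) ∨
      (∃ i' a' c', i' < i ∧ c' = 2 ∧ (a', (i', j), c') ∈ C) := by
    rcases P21 with ⟨a', c', hm, hopt⟩ | ⟨j', a', c', hne', hm, hopt⟩ | ⟨i', a', c', hne', hm, hopt⟩
    · obtain ⟨rfl, rfl⟩ : a' = 1 ∧ c' = 2 := by omega
      exact absurd hm (hno 1 2)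
    · exact Or.inl ⟨j', a', c', by omega, by omega, hm⟩
    · exact Or.inr ⟨i', a', c', by omega, by omega, hm⟩
  have Q22 : (∃ j' a' c', j < j' ∧ a' = 1 ∧ (a', (i, j'), c') ∈ C) ∨
      (∃ i' a' c', i < i' ∧ c' = 1 ∧ (a', (i', j), c') ∈ C) := by
    rcases P22 with ⟨a', c', hm, hopt⟩ | ⟨j', a', c', hne', hm, hopt⟩ | ⟨i', a', c', hne', hm, hopt⟩
    · omega
    · exact Or.inl ⟨j', a', c', by omega, by omega, hm⟩
    · exact Or.inr ⟨i', a', c', by omega, by omega, hm⟩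
  -- combine
  rcases Q11 with ⟨j1, a1, c1, hj1, ha1, hm1⟩ | ⟨i1, a1, c1, hi1, hc1, hm1⟩
  · rcases Q21 with ⟨j2, a2, c2, hj2, ha2, hm2⟩ | ⟨i2, a2, c2, hi2, hc2, hm2⟩
    · exact hKD hm1 hm2 hj1 hj2 ha1 ha2
    · rcases Q22 with ⟨j3, a3, c3, hj3, ha3, hm3⟩ | ⟨i3, a3, c3, hi3, hc3, hm3⟩
      · exact hKD hm1 hm3 hj1 hj3 ha1 ha3
      · exact hDD hm2 hm3 hi2 hi3 hc2 hc3
  · rcases Q12 with ⟨j2, a2, c2, hj2, ha2, hm2⟩ | ⟨i2, a2, c2, hi2, hc2, hm2⟩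
    · rcases Q22 with ⟨j3, a3, c3, hj3, ha3, hm3⟩ | ⟨i3, a3, c3, hi3, hc3, hm3⟩
      · exact hKD hm2 hm3 hj2 hj3 ha2 ha3
      · exact hDD hm1 hm3 hi1 hi3 hc1 hc3
    · exact hDD hm1 hm2 hi1 hi2 hc1 hc2
lemma mem_Nbr {E : Finset (ℕ × ℕ)} {i j : ℕ} : j ∈ Nbr E i ↔ (i, j) ∈ E := by
  simp only [Nbr, Finset.mem_image, Finset.mem_filter]
  constructor
  · rintro ⟨⟨p1, p2⟩, ⟨hpE, hp1⟩, hp2⟩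
    simp only at hp1 hp2
    subst hp1; subst hp2; exact hpE
  · intro h; exact ⟨(i, j), ⟨h, rfl⟩, rfl⟩

lemma mem_Nbr' {E : Finset (ℕ × ℕ)} {i j : ℕ} : i ∈ Nbr' E j ↔ (i, j) ∈ E := by
  simp only [Nbr', Finset.mem_image, Finset.mem_filter]
  constructor
  · rintro ⟨⟨p1, p2⟩, ⟨hpE, hp2⟩, hp1⟩
    simp only at hp1 hp2
    subst hp1; subst hp2; exact hpE
  · intro h; exact ⟨(i, j), ⟨h, rfl⟩, rfl⟩

lemma double_left {E : Finset (ℕ × ℕ)} {C : Set Route} (hC : IsMaxClique E C)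
    {i : ℕ} (hne : (Nbr E i).Nonempty) :
    ∃ j, (i, j) ∈ E ∧ (∃ c, (1, (i, j), c) ∈ C) ∧ (∃ c, (2, (i, j), c) ∈ C) := by
  classical
  set D := (Nbr E i).filter (fun j => ∃ c, (2, (i, j), c) ∈ C) with hD
  -- every route of C on a column of i gives a neighbour
  have hnbr : ∀ {a' j' c'}, (a', (i, j'), c') ∈ C → j' ∈ Nbr E i := by
    intro a' j' c' hm
    exact mem_Nbr.mpr (hC.1.1 _ hm).2.1
  have hDne : D.Nonempty := by
    by_contra hDe
    have hno2 : ∀ j' ∈ Nbr E i, ∀ c, (2, (i, j'), c) ∉ C := by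
      intro j' hj' c hcm
      exact hDe ⟨j', Finset.mem_filter.mpr ⟨hj', c, hcm⟩⟩
    set js := (Nbr E i).max' hne with hjs
    have hjsN : js ∈ Nbr E i := Finset.max'_mem _ hne
    have hjsE : (i, js) ∈ E := mem_Nbr.mp hjsN
    have W1 : ∃ i1 a1 c1, i < i1 ∧ c1 = 1 ∧ (a1, (i1, js), c1) ∈ C := by
      rcases conflict_cases hC hjsE (Or.inr rfl) (Or.inr rfl) (hno2 js hjsN 2) with
        ⟨a', c', hm, hopt⟩ | ⟨j', a', c', hne', hm, hopt⟩ | ⟨i', a', c', hne', hm, hopt⟩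
      · omega
      · exfalso
        have hj'N := hnbr hm
        have := Finset.le_max' _ j' hj'N
        omega
      · exact ⟨i', a', c', by omega, by omega, hm⟩
    obtain ⟨i1, a1, c1, hi1, hc1, hm1⟩ := W1
    rcases conflict_cases hC hjsE (Or.inr rfl) (Or.inl rfl) (hno2 js hjsN 1) with
      ⟨a', c', hm, hopt⟩ | ⟨j', a', c', hne', hm, hopt⟩ | ⟨i', a', c', hne', hm, hopt⟩
    · -- (1,(i,js),2) ∈ C : c = 2 at i, c = 1 at i1 > i
      obtain ⟨rfl, rfl⟩ : a' = 1 ∧ c' = 2 := by omega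
      exact coh_k hC.1 hm hm1 hi1 rfl hc1
    · exfalso
      have hj'N := hnbr hm
      have := Finset.le_max' _ j' hj'N
      omega
    · obtain ⟨hlt, hc'⟩ : i' < i ∧ c' = 2 := by omega
      exact coh_k hC.1 hm hm1 (hlt.trans hi1) hc' hc1
  set j0 := D.min' hDne with hj0
  have hj0D : j0 ∈ D := Finset.min'_mem _ hDne
  have hj0N : j0 ∈ Nbr E i := (Finset.mem_filter.mp hj0D).1
  have hj0E : (i, j0) ∈ E := mem_Nbr.mp hj0N
  obtain ⟨c2, hc2⟩ : ∃ c, (2, (i, j0), c) ∈ C := (Finset.mem_filter.mp hj0D).2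
  refine ⟨j0, hj0E, ?_, ⟨c2, hc2⟩⟩
  by_contra hno1
  push_neg at hno1
  have hmin : ∀ {j' a' c'}, (a', (i, j'), c') ∈ C → j' < j0 → a' = 2 → False := by
    intro j' a' c' hm hlt ha'
    subst ha'
    have : j' ∈ D := Finset.mem_filter.mpr ⟨hnbr hm, c', hm⟩
    have := Finset.min'_le _ _ this
    omega
  have W1 : ∃ i1 a1 c1, i1 < i ∧ c1 = 2 ∧ (a1, (i1, j0), c1) ∈ C := by
    rcases conflict_cases hC hj0E (Or.inl rfl) (Or.inl rfl) (hno1 1) with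
      ⟨a', c', hm, hopt⟩ | ⟨j', a', c', hne', hm, hopt⟩ | ⟨i', a', c', hne', hm, hopt⟩
    · omega
    · exact absurd (hmin hm (by omega) (by omega)) id
    · exact ⟨i', a', c', by omega, by omega, hm⟩
  obtain ⟨i1, a1, c1, hi1, hc1, hm1⟩ := W1
  rcases conflict_cases hC hj0E (Or.inl rfl) (Or.inr rfl) (hno1 2) with
    ⟨a', c', hm, hopt⟩ | ⟨j', a', c', hne', hm, hopt⟩ | ⟨i', a', c', hne', hm, hopt⟩
  · obtain ⟨rfl, rfl⟩ : a' = 2 ∧ c' = 1 := by omega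
    exact coh_k hC.1 hm1 hm hi1 hc1 rfl
  · exact absurd (hmin hm (by omega) (by omega)) id
  · obtain ⟨hlt, hc'⟩ : i < i' ∧ c' = 1 := by omega
    exact coh_k hC.1 hm1 hm (hi1.trans hlt) hc1 hc'
def Tr (r : Route) : Route := (r.2.2, (r.2.1.2, r.2.1.1), r.1)

def TrE (E : Finset (ℕ × ℕ)) : Finset (ℕ × ℕ) := E.image Prod.swap

lemma Tr_Tr (r : Route) : Tr (Tr r) = r := rfl

lemma mem_TrE {E : Finset (ℕ × ℕ)} {i j : ℕ} : (j, i) ∈ TrE E ↔ (i, j) ∈ E := by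
  simp only [TrE, Finset.mem_image]
  constructor
  · rintro ⟨⟨p1, p2⟩, hp, heq⟩
    obtain ⟨rfl, rfl⟩ : p2 = j ∧ p1 = i := by simpa [Prod.ext_iff] using heq
    exact hp
  · intro h; exact ⟨(i, j), h, rfl⟩

lemma conflict_Tr {r r' : Route} : Conflict (Tr r) (Tr r') ↔ Conflict r r' := by
  obtain ⟨a, ⟨i, j⟩, c⟩ := r
  obtain ⟨a', ⟨i', j'⟩, c'⟩ := r'
  show Conflict (c, (j, i), a) ((c', (j', i'), a')) ↔ _
  constructor <;> rintro (⟨h1, h2⟩ | ⟨h1, h2, h3⟩ | ⟨h1, h2, h3⟩)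
  · obtain ⟨rfl, rfl⟩ : j = j' ∧ i = i' := by simpa [Prod.ext_iff] using h1
    exact Or.inl ⟨rfl, by tauto⟩
  · exact Or.inr (Or.inr ⟨h1, h2, by tauto⟩)
  · exact Or.inr (Or.inl ⟨h1, h2, by tauto⟩)
  · obtain ⟨rfl, rfl⟩ : i = i' ∧ j = j' := by simpa [Prod.ext_iff] using h1
    exact Or.inl ⟨rfl, by tauto⟩
  · exact Or.inr (Or.inr ⟨h1, h2, by tauto⟩)
  · exact Or.inr (Or.inl ⟨h1, h2, by tauto⟩)

lemma mem_Tr_image {C : Set Route} {r : Route} : r ∈ Tr '' C ↔ Tr r ∈ C := by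
  constructor
  · rintro ⟨y, hy, rfl⟩
    rw [Tr_Tr]; exact hy
  · intro h; exact ⟨Tr r, h, Tr_Tr r⟩

lemma isRoute_Tr {E : Finset (ℕ × ℕ)} {r : Route} : IsRoute (TrE E) (Tr r) ↔ IsRoute E r := by
  obtain ⟨a, ⟨i, j⟩, c⟩ := r
  show ((c = 1 ∨ c = 2) ∧ (j, i) ∈ TrE E ∧ (a = 1 ∨ a = 2)) ↔ _
  rw [mem_TrE]
  exact ⟨fun ⟨h1, h2, h3⟩ => ⟨h3, h2, h1⟩, fun ⟨h1, h2, h3⟩ => ⟨h3, h2, h1⟩⟩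

lemma isClique_Tr {E : Finset (ℕ × ℕ)} {C : Set Route} (hC : IsClique E C) :
    IsClique (TrE E) (Tr '' C) := by
  constructor
  · intro r hr
    rw [mem_Tr_image] at hr
    have := hC.1 _ hr
    rw [← isRoute_Tr, Tr_Tr] at this
    exact this
  · intro r hr r' hr' hne hconf
    rw [mem_Tr_image] at hr hr'
    have hne' : Tr r ≠ Tr r' := fun h => hne (by rw [← Tr_Tr r, h, Tr_Tr])
    have : Conflict (Tr (Tr r)) (Tr (Tr r')) := by rw [Tr_Tr, Tr_Tr]; exact hconf
    exact hC.2 _ hr _ hr' hne' (conflict_Tr.mp this)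

lemma image_Tr_Tr (C : Set Route) : Tr '' (Tr '' C) = C := by
  ext r
  rw [mem_Tr_image, mem_Tr_image, Tr_Tr]

lemma TrE_TrE (E : Finset (ℕ × ℕ)) : TrE (TrE E) = E := by
  rw [TrE, TrE, Finset.image_image, Prod.swap_swap_eq, Finset.image_id]

lemma isMaxClique_Tr {E : Finset (ℕ × ℕ)} {C : Set Route} (hC : IsMaxClique E C) :
    IsMaxClique (TrE E) (Tr '' C) := by
  refine ⟨isClique_Tr hC.1, fun C' hC' hsub => ?_⟩
  have h1 : IsClique E (Tr '' C') := by
    have := isClique_Tr hC'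
    rwa [TrE_TrE] at this
  have h2 : C ⊆ Tr '' C' := by
    intro r hr
    rw [mem_Tr_image]
    exact hsub ⟨r, hr, rfl⟩
  have := hC.2 _ h1 h2
  rw [← image_Tr_Tr C', this]

lemma double_right {E : Finset (ℕ × ℕ)} {C : Set Route} (hC : IsMaxClique E C)
    {j : ℕ} (hne : (Nbr' E j).Nonempty) :
    ∃ i, (i, j) ∈ E ∧ (∃ a, (a, (i, j), 1) ∈ C) ∧ (∃ a, (a, (i, j), 2) ∈ C) := by
  have hne' : (Nbr (TrE E) j).Nonempty := by
    obtain ⟨i, hi⟩ := hne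
    exact ⟨i, mem_Nbr.mpr (mem_TrE.mpr (mem_Nbr'.mp hi))⟩
  obtain ⟨i, hE', h1, h2⟩ := double_left (isMaxClique_Tr hC) hne'
  refine ⟨i, mem_TrE.mp hE', ?_, ?_⟩
  · obtain ⟨c, hc⟩ := h1
    exact ⟨c, by rwa [mem_Tr_image] at hc⟩
  · obtain ⟨c, hc⟩ := h2
    exact ⟨c, by rwa [mem_Tr_image] at hc⟩

lemma forceA {E : Finset (ℕ × ℕ)} {C : Set Route} (hcl : IsClique E C) {i j0 : ℕ}
    (h1 : ∃ c, (1, (i, j0), c) ∈ C) (h2 : ∃ c, (2, (i, j0), c) ∈ C)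
    {a1 j1 c1 : ℕ} (hm : (a1, (i, j1), c1) ∈ C) :
    (j0 < j1 → a1 = 2) ∧ (j1 < j0 → a1 = 1) := by
  have ha : a1 = 1 ∨ a1 = 2 := (hcl.1 _ hm).1
  constructor
  · intro hlt
    rcases ha with h | h
    · exfalso; obtain ⟨c2, hc2⟩ := h2; exact coh_a hcl hc2 hm hlt rfl h
    · exact h
  · intro hlt
    rcases ha with h | h
    · exact h
    · exfalso; obtain ⟨c2, hc2⟩ := h1; exact coh_a hcl hm hc2 hlt h rfl

lemma forceK {E : Finset (ℕ × ℕ)} {C : Set Route} (hcl : IsClique E C) {i0 j : ℕ}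
    (h1 : ∃ a, (a, (i0, j), 1) ∈ C) (h2 : ∃ a, (a, (i0, j), 2) ∈ C)
    {a1 i1 c1 : ℕ} (hm : (a1, (i1, j), c1) ∈ C) :
    (i0 < i1 → c1 = 2) ∧ (i1 < i0 → c1 = 1) := by
  have hc : c1 = 1 ∨ c1 = 2 := (hcl.1 _ hm).2.2
  constructor
  · intro hlt
    rcases hc with h | h
    · exfalso; obtain ⟨a2, ha2⟩ := h2; exact coh_k hcl ha2 hm hlt rfl h
    · exact h
  · intro hlt
    rcases hc with h | h
    · exact h
    · exfalso; obtain ⟨a2, ha2⟩ := h1; exact coh_k hcl hm ha2 hlt h rfl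
lemma phi_eq_of {n m : ℕ} {E : Finset (ℕ × ℕ)}
    (hE : ∀ p ∈ E, 1 ≤ p.1 ∧ p.1 ≤ n ∧ 1 ≤ p.2 ∧ p.2 ≤ m)
    (v : CliqueVec n m E) {C : Set Route} (hC : IsMaxClique E C)
    (hvf : ∀ i ∈ Finset.Icc 1 n,
      (∃ c, (1, (i, v.f i), c) ∈ C) ∧ (∃ c, (2, (i, v.f i), c) ∈ C))
    (hvg : ∀ j ∈ Finset.Icc 1 m,
      (∃ a, (a, (v.g j, j), 1) ∈ C) ∧ (∃ a, (a, (v.g j, j), 2) ∈ C))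
    (hvs : ∀ i j, (i, j) ∈ E → v.f i = j → v.g j = i →
      (v.s (i, j) = true ↔ (2, (i, j), 1) ∈ C)) :
    phi v = C := by
  have hFA : ∀ i ∈ Finset.Icc 1 n, ∀ {a1 j1 c1 : ℕ}, (a1, (i, j1), c1) ∈ C →
      (v.f i < j1 → a1 = 2) ∧ (j1 < v.f i → a1 = 1) :=
    fun i hi => fun {a1 j1 c1} hm => forceA hC.1 (hvf i hi).1 (hvf i hi).2 hm
  have hFK : ∀ j ∈ Finset.Icc 1 m, ∀ {a1 i1 c1 : ℕ}, (a1, (i1, j), c1) ∈ C →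
      (v.g j < i1 → c1 = 2) ∧ (i1 < v.g j → c1 = 1) :=
    fun j hj => fun {a1 i1 c1} hm => forceK hC.1 (hvg j hj).1 (hvg j hj).2 hm
  ext ⟨a, ⟨i, j⟩, c⟩
  rw [mem_phi_iff]
  constructor
  · rintro ⟨hEij, ha, hc, k1, k2, k3, k4, k5, k6⟩
    have hIJ := hE _ hEij
    have hiI : i ∈ Finset.Icc 1 n := Finset.mem_Icc.mpr ⟨hIJ.1, hIJ.2.1⟩
    have hjI : j ∈ Finset.Icc 1 m := Finset.mem_Icc.mpr ⟨hIJ.2.2.1, hIJ.2.2.2⟩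
    obtain ⟨a0, c0, h0⟩ := edge_occupied hC hEij
    have hA : ∃ c', (a, (i, j), c') ∈ C := by
      rcases lt_trichotomy (v.f i) j with hlt | heq | hgt
      · refine ⟨c0, ?_⟩
        rw [show a = a0 by have := (hFA i hiI h0).1 hlt; have := k1 hlt; omega]
        exact h0
      · rcases ha with rfl | rfl
        · rw [← heq]; exact (hvf i hiI).1
        · rw [← heq]; exact (hvf i hiI).2
      · refine ⟨c0, ?_⟩
        rw [show a = a0 by have := (hFA i hiI h0).2 hgt; have := k2 hgt; omega]
        exact h0
    have hK : ∃ a', (a', (i, j), c) ∈ C := by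
      rcases lt_trichotomy (v.g j) i with hlt | heq | hgt
      · refine ⟨a0, ?_⟩
        rw [show c = c0 by have := (hFK j hjI h0).1 hlt; have := k3 hlt; omega]
        exact h0
      · rcases hc with rfl | rfl
        · rw [← heq]; exact (hvg j hjI).1
        · rw [← heq]; exact (hvg j hjI).2
      · refine ⟨a0, ?_⟩
        rw [show c = c0 by have := (hFK j hjI h0).2 hgt; have := k4 hgt; omega]
        exact h0
    obtain ⟨c', hA⟩ := hA
    obtain ⟨a', hK⟩ := hK
    rcases lt_trichotomy (v.g j) i with hg | hg | hg
    · rw [show c = c' by have := (hFK j hjI hA).1 hg; have := k3 hg; omega]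
      exact hA
    · rcases lt_trichotomy (v.f i) j with hf' | hf' | hf'
      · rw [show a = a' by have := (hFA i hiI hK).1 hf'; have := k1 hf'; omega]
        exact hK
      · -- double edge : v.f i = j and v.g j = i
        by_cases h21 : (2, (i, j), 1) ∈ C
        · have hstrue : v.s (i, j) = true := (hvs i j hEij hf' hg).mpr h21
          have hnot12 := k6 hf' hg hstrue
          rcases ha with rfl | rfl
          · have hc1 : c = 1 := by
              rcases hc with h | h
              · exact h
              · exact absurd ⟨rfl, h⟩ hnot12
            subst hc1
            obtain ⟨cx, hcx⟩ := (hvf i hiI).1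
            rw [hf'] at hcx
            have : cx = 1 ∨ cx = 2 := (hC.1.1 _ hcx).2.2
            rcases this with rfl | rfl
            · exact hcx
            · exact absurd (coh_e hC.1 hcx h21) not_false
          · rcases hc with rfl | rfl
            · exact h21
            · obtain ⟨ay, hay⟩ := (hvg j hjI).2
              rw [hg] at hay
              have : ay = 1 ∨ ay = 2 := (hC.1.1 _ hay).1
              rcases this with rfl | rfl
              · exact absurd (coh_e hC.1 hay h21) not_false
              · exact hay
        · have hnot21 : ¬(a = 2 ∧ c = 1) := by
            apply k5 hf' hg
            cases hsv : v.s (i, j) with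
            | false => rfl
            | true => exact absurd ((hvs i j hEij hf' hg).mp hsv) h21
          rcases ha with rfl | rfl
          · rcases hc with rfl | rfl
            · obtain ⟨ax, hax⟩ := (hvg j hjI).1
              rw [hg] at hax
              have : ax = 1 ∨ ax = 2 := (hC.1.1 _ hax).1
              rcases this with rfl | rfl
              · exact hax
              · exact absurd hax h21
            · -- the route (1,(i,j),2): coherent with everything, so in C
              apply maximal_mem hC ⟨Or.inl rfl, hEij, Or.inr rfl⟩
              intro r' hr' hconf
              obtain ⟨a2, ⟨i2, j2⟩, c2⟩ := r'
              simp only [Conflict, Prod.mk.injEq] at hconf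
              rcases hconf with ⟨⟨rfl, rfl⟩, h2⟩ | ⟨rfl, h2, h3⟩ | ⟨rfl, h2, h3⟩
              · obtain ⟨rfl, rfl⟩ : a2 = 2 ∧ c2 = 1 := by omega
                exact h21 hr'
              · have := (hFA i hiI hr').2 (by omega)
                omega
              · have := (hFK j hjI hr').1 (by omega)
                omega
          · have hc2 : c = 2 := by
              rcases hc with h | h
              · exact absurd ⟨rfl, h⟩ hnot21
              · exact h
            subst hc2
            obtain ⟨cy, hcy⟩ := (hvf i hiI).2
            rw [hf'] at hcy
            have : cy = 1 ∨ cy = 2 := (hC.1.1 _ hcy).2.2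
            rcases this with rfl | rfl
            · exact absurd hcy h21
            · exact hcy
      · rw [show a = a' by have := (hFA i hiI hK).2 hf'; have := k2 hf'; omega]
        exact hK
    · rw [show c = c' by have := (hFK j hjI hA).2 hg; have := k4 hg; omega]
      exact hA
  · intro hm
    have hroute := hC.1.1 _ hm
    have hEij : (i, j) ∈ E := hroute.2.1
    have hIJ := hE _ hEij
    have hiI : i ∈ Finset.Icc 1 n := Finset.mem_Icc.mpr ⟨hIJ.1, hIJ.2.1⟩
    have hjI : j ∈ Finset.Icc 1 m := Finset.mem_Icc.mpr ⟨hIJ.2.2.1, hIJ.2.2.2⟩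
    refine ⟨hEij, hroute.1, hroute.2.2, (hFA i hiI hm).1, (hFA i hiI hm).2,
      (hFK j hjI hm).1, (hFK j hjI hm).2, ?_, ?_⟩
    · rintro hfj hgi hsf ⟨rfl, rfl⟩
      have : v.s (i, j) = true := (hvs i j hEij hfj hgi).mpr hm
      rw [this] at hsf
      cases hsf
    · rintro hfj hgi hst ⟨rfl, rfl⟩
      exact coh_e hC.1 hm ((hvs i j hEij hfj hgi).mp hst)
/-- The clique map `φ` is a bijection from clique vectors onto maximal cliques. -/
theorem phi_bijection (n m : ℕ) (hn : 1 ≤ n) (hm : 1 ≤ m) (E : Finset (ℕ × ℕ))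
    (hE : ∀ p ∈ E, 1 ≤ p.1 ∧ p.1 ≤ n ∧ 1 ≤ p.2 ∧ p.2 ≤ m)
    (hdegS : ∀ i ∈ Finset.Icc 1 n, 2 ≤ (Nbr E i).card)
    (hdegT : ∀ j ∈ Finset.Icc 1 m, 2 ≤ (Nbr' E j).card) :
    (∀ v : CliqueVec n m E, IsMaxClique E (phi v)) ∧
    Function.Injective (phi : CliqueVec n m E → Set Route) ∧
    (∀ C : Set Route, IsMaxClique E C → ∃ v : CliqueVec n m E, phi v = C) := by
  classical
  refine ⟨fun v => phi_isMaxClique hE v, phi_injective, fun C hC => ?_⟩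
  have hfex : ∀ i : ℕ, ∃ j,
      (i ∈ Finset.Icc 1 n →
        ((i, j) ∈ E ∧ (∃ c, (1, (i, j), c) ∈ C) ∧ (∃ c, (2, (i, j), c) ∈ C))) ∧
      (i ∉ Finset.Icc 1 n → j = 0) := by
    intro i
    by_cases hi : i ∈ Finset.Icc 1 n
    · obtain ⟨j, hj⟩ := double_left hC (Finset.card_pos.mp (lt_of_lt_of_le (by omega) (hdegS i hi)))
      exact ⟨j, fun _ => hj, fun h => absurd hi h⟩
    · exact ⟨0, fun h => absurd h hi, fun _ => rfl⟩
  choose f hf1 hf2 using hfex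
  have hgex : ∀ j : ℕ, ∃ i,
      (j ∈ Finset.Icc 1 m →
        ((i, j) ∈ E ∧ (∃ a, (a, (i, j), 1) ∈ C) ∧ (∃ a, (a, (i, j), 2) ∈ C))) ∧
      (j ∉ Finset.Icc 1 m → i = 0) := by
    intro j
    by_cases hj : j ∈ Finset.Icc 1 m
    · obtain ⟨i, hi⟩ := double_right hC (Finset.card_pos.mp (lt_of_lt_of_le (by omega) (hdegT j hj)))
      exact ⟨i, fun _ => hi, fun h => absurd hj h⟩
    · exact ⟨0, fun h => absurd h hj, fun _ => rfl⟩
  choose g hg1 hg2 using hgex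
  refine ⟨⟨f, g, fun p => if (2, p, 1) ∈ C ∧ f p.1 = p.2 ∧ g p.2 = p.1 then true else false,
    fun i hi => (hf1 i hi).1, fun j hj => (hg1 j hj).1, ?_, hf2, hg2, ?_⟩, ?_⟩
  · intro p hp hsp
    have hsp' : (if (2, p, 1) ∈ C ∧ f p.1 = p.2 ∧ g p.2 = p.1 then true else false) = true := hsp
    by_cases hcond : (2, p, 1) ∈ C ∧ f p.1 = p.2 ∧ g p.2 = p.1
    · exact ⟨hcond.2.1, hcond.2.2⟩
    · rw [if_neg hcond] at hsp'
      cases hsp'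
  · intro p hp
    show (if (2, p, 1) ∈ C ∧ f p.1 = p.2 ∧ g p.2 = p.1 then true else false) = false
    rw [if_neg]
    rintro ⟨h21, -, -⟩
    exact hp (hC.1.1 _ h21).2.1
  · apply phi_eq_of hE _ hC
    · exact fun i hi => ⟨(hf1 i hi).2.1, (hf1 i hi).2.2⟩
    · exact fun j hj => ⟨(hg1 j hj).2.1, (hg1 j hj).2.2⟩
    · intro i j hij hfj hgi
      show (if (2, ((i : ℕ), (j : ℕ)), 1) ∈ C ∧ f i = j ∧ g j = i then true else false) = true
        ↔ (2, (i, j), 1) ∈ C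
      constructor
      · intro hst
        by_cases hcond : (2, ((i : ℕ), (j : ℕ)), 1) ∈ C ∧ f i = j ∧ g j = i
        · exact hcond.1
        · rw [if_neg hcond] at hst
          cases hst
      · intro h21
        rw [if_pos ⟨h21, hfj, hgi⟩]
end Helpers
end

section
/- The number of maximal cliques of routes of G(H) with respect to the canonical bipartite framing equals the number of matchings of W(H); that is, there is a bijection between the set of such maximal cliques and the set of matchings of W(H). -/
open Finset Filter Pointwise

namespace MC

open Classical

lemma mem_nbr {E : Finset (ℕ × ℕ)} {i j : ℕ} : j ∈ Nbr E i ↔ (i, j) ∈ E := by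
  simp only [Nbr, Finset.mem_image, Finset.mem_filter]
  constructor
  · rintro ⟨⟨x, y⟩, ⟨hp, rfl⟩, rfl⟩; exact hp
  · intro h; exact ⟨(i, j), ⟨h, rfl⟩, rfl⟩

lemma mem_nbr' {E : Finset (ℕ × ℕ)} {i j : ℕ} : i ∈ Nbr' E j ↔ (i, j) ∈ E := by
  simp only [Nbr', Finset.mem_image, Finset.mem_filter]
  constructor
  · rintro ⟨⟨x, y⟩, ⟨hp, rfl⟩, rfl⟩; exact hp
  · intro h; exact ⟨(i, j), ⟨h, rfl⟩, rfl⟩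

variable (E : Finset (ℕ × ℕ))

noncomputable def minN (i : ℕ) : ℕ :=
  if h : (Nbr E i).Nonempty then (Nbr E i).min' h else 0

noncomputable def maxN (j : ℕ) : ℕ :=
  if h : (Nbr' E j).Nonempty then (Nbr' E j).max' h else 0

def covL (M : Set WEdge) (i j : ℕ) : Prop :=
  Sum.inl (i, j) ∈ M ∨ Sum.inr (Sum.inl (i, j)) ∈ M

def covR (M : Set WEdge) (j i : ℕ) : Prop :=
  Sum.inl (i, j) ∈ M ∨ Sum.inr (Sum.inr (j, i)) ∈ M

noncomputable def fM (M : Set WEdge) (i : ℕ) : ℕ :=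
  if h : ∃ j, covL M i j then h.choose else minN E i

noncomputable def gM (M : Set WEdge) (j : ℕ) : ℕ :=
  if h : ∃ i, covR M j i then h.choose else maxN E j

def aOK (f : ℕ → ℕ) (a i j : ℕ) : Prop := (a = 1 ∧ j ≤ f i) ∨ (a = 2 ∧ f i ≤ j)

def cOK (g : ℕ → ℕ) (c i j : ℕ) : Prop := (c = 1 ∧ i ≤ g j) ∨ (c = 2 ∧ g j ≤ i)

lemma aOK1 {f : ℕ → ℕ} {a i j : ℕ} (h : aOK f a i j) (h1 : a = 1) : j ≤ f i := by
  rcases h with ⟨-, hle⟩ | ⟨ha, -⟩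
  · exact hle
  · omega

lemma aOK2 {f : ℕ → ℕ} {a i j : ℕ} (h : aOK f a i j) (h2 : a = 2) : f i ≤ j := by
  rcases h with ⟨ha, -⟩ | ⟨-, hle⟩
  · omega
  · exact hle

lemma cOK1 {g : ℕ → ℕ} {c i j : ℕ} (h : cOK g c i j) (h1 : c = 1) : i ≤ g j := by
  rcases h with ⟨-, hle⟩ | ⟨hc, -⟩
  · exact hle
  · omega

lemma cOK2 {g : ℕ → ℕ} {c i j : ℕ} (h : cOK g c i j) (h2 : c = 2) : g j ≤ i := by
  rcases h with ⟨hc, -⟩ | ⟨-, hle⟩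
  · omega
  · exact hle

def Phi (M : Set WEdge) : Set Route :=
  {r | r.2.1 ∈ E ∧ aOK (fM E M) r.1 r.2.1.1 r.2.1.2 ∧ cOK (gM E M) r.2.2 r.2.1.1 r.2.1.2 ∧
    ¬(r.1 = 2 ∧ r.2.2 = 1 ∧ Sum.inl r.2.1 ∈ M) ∧
    ¬(r.1 = 1 ∧ r.2.2 = 2 ∧ Sum.inl r.2.1 ∉ M ∧ fM E M r.2.1.1 = r.2.1.2 ∧
        gM E M r.2.1.2 = r.2.1.1)}

def edgeCond (C : Set Route) (e : ℕ × ℕ) : Prop :=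
  (1, e, 1) ∈ C ∧ (1, e, 2) ∈ C ∧ (2, e, 2) ∈ C ∧ (2, e, 1) ∉ C

def Psi (C : Set Route) : Set WEdge :=
  {w | match w with
    | Sum.inl e => e ∈ E ∧ edgeCond C e
    | Sum.inr (Sum.inl p) => p ∈ E ∧ (∃ j' ∈ Nbr E p.1, j' < p.2) ∧
        (∃ c, (1, p, c) ∈ C) ∧ (∃ c, (2, p, c) ∈ C) ∧ ¬ edgeCond C p
    | Sum.inr (Sum.inr q) => (q.2, q.1) ∈ E ∧ (∃ i' ∈ Nbr' E q.1, q.2 < i') ∧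
        (∃ a, (a, (q.2, q.1), 1) ∈ C) ∧ (∃ a, (a, (q.2, q.1), 2) ∈ C) ∧
        ¬ edgeCond C (q.2, q.1)}

lemma clique_L {C : Set Route} (hC : IsClique E C) {i j j' c c' : ℕ}
    (h2 : (2, (i, j), c) ∈ C) (h1 : (1, (i, j'), c') ∈ C) (hlt : j < j') : False := by
  refine hC.2 _ h2 _ h1 (fun h => ?_) (Or.inr (Or.inl ⟨rfl, by simp; omega, Or.inl ⟨hlt, rfl, rfl⟩⟩))
  simp only [Prod.mk.injEq] at h
  omega

lemma clique_R {C : Set Route} (hC : IsClique E C) {i i' j a a' : ℕ}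
    (h2 : (a, (i, j), 2) ∈ C) (h1 : (a', (i', j), 1) ∈ C) (hlt : i < i') : False := by
  refine hC.2 _ h2 _ h1 (fun h => ?_)
    (Or.inr (Or.inr ⟨rfl, by simp; omega, Or.inl ⟨hlt, rfl, rfl⟩⟩))
  simp only [Prod.mk.injEq] at h
  omega

lemma clique_E {C : Set Route} (hC : IsClique E C) {e : ℕ × ℕ}
    (h1 : (1, e, 2) ∈ C) (h2 : (2, e, 1) ∈ C) : False := by
  refine hC.2 _ h1 _ h2 (fun h => ?_) (Or.inl ⟨rfl, Or.inl ⟨rfl, rfl, rfl, rfl⟩⟩)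
  simp only [Prod.mk.injEq] at h
  omega

lemma ext_conflict {C : Set Route} (hC : IsMaxClique E C) {r : Route} (hr : IsRoute E r)
    (hrC : r ∉ C) : ∃ r' ∈ C, Conflict r r' ∨ Conflict r' r := by
  by_contra h
  push_neg at h
  have hclique : IsClique E (insert r C) := by
    constructor
    · rintro x (rfl | hx)
      · exact hr
      · exact hC.1.1 x hx
    · rintro x (rfl | hx) y (rfl | hy) hxy
      · exact absurd rfl hxy
      · exact (h y hy).1
      · exact (h x hx).2
      · exact hC.1.2 x hx y hy hxy
  have heq := hC.2 _ hclique (Set.subset_insert r C)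
  exact hrC (heq ▸ Set.mem_insert r C)

lemma conflict_elim {r r' : Route} (h : Conflict r r' ∨ Conflict r' r) :
    (r.2.1 = r'.2.1 ∧ ((r.1 = 1 ∧ r.2.2 = 2 ∧ r'.1 = 2 ∧ r'.2.2 = 1) ∨
      (r.1 = 2 ∧ r.2.2 = 1 ∧ r'.1 = 1 ∧ r'.2.2 = 2))) ∨
    (r.2.1.1 = r'.2.1.1 ∧ ((r.2.1.2 < r'.2.1.2 ∧ r'.1 = 1 ∧ r.1 = 2) ∨
      (r'.2.1.2 < r.2.1.2 ∧ r.1 = 1 ∧ r'.1 = 2))) ∨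
    (r.2.1.2 = r'.2.1.2 ∧ ((r.2.1.1 < r'.2.1.1 ∧ r.2.2 = 2 ∧ r'.2.2 = 1) ∨
      (r'.2.1.1 < r.2.1.1 ∧ r'.2.2 = 2 ∧ r.2.2 = 1))) := by
  unfold Conflict at h
  rcases h with (⟨he, hx⟩ | ⟨he, _, hx⟩ | ⟨he, _, hx⟩) | (⟨he, hx⟩ | ⟨he, _, hx⟩ | ⟨he, _, hx⟩)
  · exact Or.inl ⟨he, hx⟩
  · exact Or.inr (Or.inl ⟨he, hx⟩)
  · exact Or.inr (Or.inr ⟨he, hx⟩)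
  · exact Or.inl ⟨he.symm, by tauto⟩
  · exact Or.inr (Or.inl ⟨he.symm, hx.symm⟩)
  · exact Or.inr (Or.inr ⟨he.symm, hx.symm⟩)

lemma left_unique {M : Set WEdge} (hM : IsMatching E M) {e e' : WEdge} {i : ℕ}
    (he : e ∈ M) (he' : e' ∈ M) (h1 : leftV e = some i) (h2 : leftV e' = some i) : e = e' := by
  by_contra hne
  rcases (hM.2 e he e' he' hne).1 with h | h
  · rw [h1] at h; exact Option.some_ne_none _ h
  · exact h (h1.trans h2.symm)

lemma right_unique {M : Set WEdge} (hM : IsMatching E M) {e e' : WEdge} {j : ℕ}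
    (he : e ∈ M) (he' : e' ∈ M) (h1 : rightV e = some j) (h2 : rightV e' = some j) : e = e' := by
  by_contra hne
  rcases (hM.2 e he e' he' hne).2 with h | h
  · rw [h1] at h; exact Option.some_ne_none _ h
  · exact h (h1.trans h2.symm)

lemma covL_unique {M : Set WEdge} (hM : IsMatching E M) {i j j' : ℕ}
    (h : covL M i j) (h' : covL M i j') : j = j' := by
  rcases h with h | h <;> rcases h' with h' | h' <;>
    have := left_unique E hM h h' rfl rfl <;> simp_all

lemma covR_unique {M : Set WEdge} (hM : IsMatching E M) {i i' j : ℕ}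
    (h : covR M j i) (h' : covR M j i') : i = i' := by
  rcases h with h | h <;> rcases h' with h' | h' <;>
    have := right_unique E hM h h' rfl rfl <;> simp_all

lemma fM_eq {M : Set WEdge} (hM : IsMatching E M) {i j : ℕ} (h : covL M i j) :
    fM E M i = j := by
  have hex : ∃ j, covL M i j := ⟨j, h⟩
  rw [fM, dif_pos hex]
  exact covL_unique E hM hex.choose_spec h

lemma gM_eq {M : Set WEdge} (hM : IsMatching E M) {i j : ℕ} (h : covR M j i) :
    gM E M j = i := by
  have hex : ∃ i, covR M j i := ⟨i, h⟩
  rw [gM, dif_pos hex]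
  exact covR_unique E hM hex.choose_spec h

lemma fM_mem {M : Set WEdge} (hM : IsMatching E M) {i j : ℕ} (hij : (i, j) ∈ E) :
    (i, fM E M i) ∈ E := by
  rw [fM]
  split
  · next h =>
    rcases h.choose_spec with hc | hc
    · exact (hM.1 _ hc : IsWEdge E (Sum.inl (i, _)))
    · exact (hM.1 _ hc : IsWEdge E (Sum.inr (Sum.inl (i, _)))).1
  · rw [minN, dif_pos ⟨j, mem_nbr.mpr hij⟩]
    exact mem_nbr.mp ((Nbr E i).min'_mem _)

lemma gM_mem {M : Set WEdge} (hM : IsMatching E M) {i j : ℕ} (hij : (i, j) ∈ E) :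
    (gM E M j, j) ∈ E := by
  rw [gM]
  split
  · next h =>
    rcases h.choose_spec with hc | hc
    · exact (hM.1 _ hc : IsWEdge E (Sum.inl (_, j)))
    · exact (hM.1 _ hc : IsWEdge E (Sum.inr (Sum.inr (j, _)))).1
  · rw [maxN, dif_pos ⟨i, mem_nbr'.mpr hij⟩]
    exact mem_nbr'.mp ((Nbr' E j).max'_mem _)

lemma inl_f {M : Set WEdge} (hM : IsMatching E M) {i j : ℕ} (h : Sum.inl (i, j) ∈ M) :
    fM E M i = j := fM_eq E hM (Or.inl h)

lemma inl_g {M : Set WEdge} (hM : IsMatching E M) {i j : ℕ} (h : Sum.inl (i, j) ∈ M) :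
    gM E M j = i := gM_eq E hM (Or.inl h)

lemma phi_clique (M : Set WEdge) : IsClique E (Phi E M) := by
  constructor
  · rintro ⟨a, ⟨i, j⟩, c⟩ hr
    obtain ⟨hE, ha, hc, -, -⟩ := hr
    refine ⟨?_, hE, ?_⟩
    · rcases ha with ⟨h, -⟩ | ⟨h, -⟩
      · exact Or.inl h
      · exact Or.inr h
    · rcases hc with ⟨h, -⟩ | ⟨h, -⟩
      · exact Or.inl h
      · exact Or.inr h
  · rintro ⟨a, ⟨i, j⟩, c⟩ hr ⟨a', ⟨i', j'⟩, c'⟩ hr' hne hconf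
    obtain ⟨hE, ha, hc, hx1, hx2⟩ := hr
    obtain ⟨hE', ha', hc', hx1', hx2'⟩ := hr'
    dsimp only at ha hc hx1 hx2 ha' hc' hx1' hx2'
    rcases hconf with ⟨he, hp⟩ | ⟨hi, hj, hp⟩ | ⟨hj, hi, hp⟩
    · simp only [Prod.mk.injEq] at he
      obtain ⟨rfl, rfl⟩ := he
      rcases hp with ⟨ha1, hc2, ha2', hc1'⟩ | ⟨ha2, hc1, ha1', hc2'⟩
      · have hf : fM E M i = j := le_antisymm (aOK2 ha' ha2') (aOK1 ha ha1)
        have hg : gM E M j = i := le_antisymm (cOK2 hc hc2) (cOK1 hc' hc1')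
        by_cases hMem : Sum.inl (i, j) ∈ M
        · exact hx1' ⟨ha2', hc1', hMem⟩
        · exact hx2 ⟨ha1, hc2, hMem, hf, hg⟩
      · have hf : fM E M i = j := le_antisymm (aOK2 ha ha2) (aOK1 ha' ha1')
        have hg : gM E M j = i := le_antisymm (cOK2 hc' hc2') (cOK1 hc hc1)
        by_cases hMem : Sum.inl (i, j) ∈ M
        · exact hx1 ⟨ha2, hc1, hMem⟩
        · exact hx2' ⟨ha1', hc2', hMem, hf, hg⟩
    · dsimp only at hi hj hp
      subst hi
      rcases hp with ⟨hlt, h1', h2⟩ | ⟨hlt, h1, h2'⟩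
      · have := aOK2 ha h2
        have := aOK1 ha' h1'
        omega
      · have := aOK1 ha h1
        have := aOK2 ha' h2'
        omega
    · dsimp only at hi hj hp
      subst hj
      rcases hp with ⟨hlt, h2, h1'⟩ | ⟨hlt, h2', h1⟩
      · have := cOK2 hc h2
        have := cOK1 hc' h1'
        omega
      · have := cOK1 hc h1
        have := cOK2 hc' h2'
        omega

lemma phi_ext {M : Set WEdge} (hM : IsMatching E M) {r : Route} (hr : IsRoute E r)
    (hrC : r ∉ Phi E M) : ∃ r' ∈ Phi E M, Conflict r r' ∨ Conflict r' r := by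
  obtain ⟨a, ⟨i, j⟩, c⟩ := r
  obtain ⟨ha12, hij, hc12⟩ := hr
  dsimp only at ha12 hij hc12
  by_cases hA : aOK (fM E M) a i j
  · by_cases hC : cOK (gM E M) c i j
    · by_cases hQ1 : a = 2 ∧ c = 1 ∧ Sum.inl (i, j) ∈ M
      · -- witness (1,(i,j),2)
        obtain ⟨ha2, hc1, hMem⟩ := hQ1
        have hf : fM E M i = j := inl_f E hM hMem
        have hg : gM E M j = i := inl_g E hM hMem
        refine ⟨(1, (i, j), 2), ⟨hij, Or.inl ⟨rfl, hf.ge⟩, Or.inr ⟨rfl, hg.le⟩,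
          by simp, by simp [hMem]⟩, Or.inl (Or.inl ⟨rfl, Or.inr ⟨ha2, hc1, rfl, rfl⟩⟩)⟩
      · by_cases hQ2 : a = 1 ∧ c = 2 ∧ Sum.inl (i, j) ∉ M ∧ fM E M i = j ∧ gM E M j = i
        · -- witness (2,(i,j),1)
          obtain ⟨ha1, hc2, hMem, hf, hg⟩ := hQ2
          refine ⟨(2, (i, j), 1), ⟨hij, Or.inr ⟨rfl, hf.le⟩, Or.inl ⟨rfl, hg.ge⟩,
            by simp [hMem], by simp⟩, Or.inl (Or.inl ⟨rfl, Or.inl ⟨ha1, hc2, rfl, rfl⟩⟩)⟩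
        · exact absurd ⟨hij, hA, hC, (by tauto), (by tauto)⟩ hrC
    · have hgmem : (gM E M j, j) ∈ E := gM_mem E hM hij
      rcases hc12 with hc1 | hc2
      · -- c = 1, g j < i; witness (a₀, (g j, j), 2)
        have hgi : gM E M j < i := by
          by_contra hlt
          exact hC (Or.inl ⟨hc1, by omega⟩)
        by_cases hfa : fM E M (gM E M j) ≤ j
        · refine ⟨(2, (gM E M j, j), 2), ⟨hgmem, Or.inr ⟨rfl, hfa⟩, Or.inr ⟨rfl, le_refl _⟩,
            by simp, by simp⟩,
            Or.inl (Or.inr (Or.inr ⟨rfl, by simp; omega, Or.inr ⟨hgi, rfl, hc1⟩⟩))⟩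
        · have hInl : Sum.inl (gM E M j, j) ∉ M := fun hm => hfa (inl_f E hM hm).le
          refine ⟨(1, (gM E M j, j), 2), ⟨hgmem, Or.inl ⟨rfl, (not_le.mp hfa).le⟩,
            Or.inr ⟨rfl, le_refl _⟩, by simp, fun h => hfa h.2.2.2.1.le⟩,
            Or.inl (Or.inr (Or.inr ⟨rfl, by simp; omega, Or.inr ⟨hgi, rfl, hc1⟩⟩))⟩
      · -- c = 2, i < g j; witness (a₀, (g j, j), 1)
        have hgi : i < gM E M j := by
          by_contra hlt
          exact hC (Or.inr ⟨hc2, by omega⟩)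
        by_cases hfa : j ≤ fM E M (gM E M j)
        · refine ⟨(1, (gM E M j, j), 1), ⟨hgmem, Or.inl ⟨rfl, hfa⟩, Or.inl ⟨rfl, le_refl _⟩,
            by simp, by simp⟩,
            Or.inl (Or.inr (Or.inr ⟨rfl, by simp; omega, Or.inl ⟨hgi, hc2, rfl⟩⟩))⟩
        · have hInl : Sum.inl (gM E M j, j) ∉ M := fun hm => hfa (inl_f E hM hm).ge
          refine ⟨(2, (gM E M j, j), 1), ⟨hgmem, Or.inr ⟨rfl, (not_le.mp hfa).le⟩,
            Or.inl ⟨rfl, le_refl _⟩, by simp [hInl], by simp⟩,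
            Or.inl (Or.inr (Or.inr ⟨rfl, by simp; omega, Or.inl ⟨hgi, hc2, rfl⟩⟩))⟩
  · have hfmem : (i, fM E M i) ∈ E := fM_mem E hM hij
    rcases ha12 with ha1 | ha2
    · -- a = 1, f i < j; witness (2, (i, f i), c₀)
      have hfj : fM E M i < j := by
        by_contra hlt
        exact hA (Or.inl ⟨ha1, by omega⟩)
      by_cases hgc : gM E M (fM E M i) ≤ i
      · refine ⟨(2, (i, fM E M i), 2), ⟨hfmem, Or.inr ⟨rfl, le_refl _⟩, Or.inr ⟨rfl, hgc⟩,
          by simp, by simp⟩,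
          Or.inl (Or.inr (Or.inl ⟨rfl, by simp; omega, Or.inr ⟨hfj, ha1, rfl⟩⟩))⟩
      · have hInl : Sum.inl (i, fM E M i) ∉ M := fun hm => hgc (inl_g E hM hm).le
        refine ⟨(2, (i, fM E M i), 1), ⟨hfmem, Or.inr ⟨rfl, le_refl _⟩, Or.inl ⟨rfl, (not_le.mp hgc).le⟩,
          by simp [hInl], by simp⟩,
          Or.inl (Or.inr (Or.inl ⟨rfl, by simp; omega, Or.inr ⟨hfj, ha1, rfl⟩⟩))⟩
    · -- a = 2, j < f i; witness (1, (i, f i), c₀)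
      have hfj : j < fM E M i := by
        by_contra hlt
        exact hA (Or.inr ⟨ha2, by omega⟩)
      by_cases hgc : i ≤ gM E M (fM E M i)
      · refine ⟨(1, (i, fM E M i), 1), ⟨hfmem, Or.inl ⟨rfl, le_refl _⟩, Or.inl ⟨rfl, hgc⟩,
          by simp, by simp⟩,
          Or.inl (Or.inr (Or.inl ⟨rfl, by simp; omega, Or.inl ⟨hfj, rfl, ha2⟩⟩))⟩
      · have hInl : Sum.inl (i, fM E M i) ∉ M := fun hm => hgc (inl_g E hM hm).ge
        refine ⟨(1, (i, fM E M i), 2), ⟨hfmem, Or.inl ⟨rfl, le_refl _⟩, Or.inr ⟨rfl, (not_le.mp hgc).le⟩,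
          by simp, fun h => hgc h.2.2.2.2.ge⟩,
          Or.inl (Or.inr (Or.inl ⟨rfl, by simp; omega, Or.inl ⟨hfj, rfl, ha2⟩⟩))⟩

lemma phi_max {M : Set WEdge} (hM : IsMatching E M) : IsMaxClique E (Phi E M) := by
  refine ⟨phi_clique E M, fun C' hC' hsub => ?_⟩
  refine Set.Subset.antisymm (fun r hr => ?_) hsub
  by_contra hrP
  obtain ⟨r', hr'P, hconf⟩ := phi_ext E hM (hC'.1 r hr) hrP
  rcases hconf with h | h
  · exact hC'.2 r hr r' (hsub hr'P) (by rintro rfl; exact hrP hr'P) h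
  · exact hC'.2 r' (hsub hr'P) r hr (by rintro rfl; exact hrP hr'P) h

lemma edgeCond_phi {M : Set WEdge} (hM : IsMatching E M) (e : ℕ × ℕ) :
    edgeCond (Phi E M) e ↔ Sum.inl e ∈ M := by
  obtain ⟨i, j⟩ := e
  constructor
  · rintro ⟨h11, h12, h22, h21⟩
    obtain ⟨hE, ha1, hc1, -, -⟩ := h11
    obtain ⟨-, ha2, hc2, -, -⟩ := h22
    dsimp only at hE ha1 ha2 hc1 hc2
    have hf : fM E M i = j := le_antisymm (aOK2 ha2 rfl) (aOK1 ha1 rfl)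
    have hg : gM E M j = i := le_antisymm (cOK2 hc2 rfl) (cOK1 hc1 rfl)
    by_contra hMem
    exact h21 ⟨hE, Or.inr ⟨rfl, hf.le⟩, Or.inl ⟨rfl, hg.ge⟩, fun h => hMem h.2.2,
      fun h => absurd h.1 (by norm_num)⟩
  · intro hMem
    have hE : (i, j) ∈ E := hM.1 _ hMem
    have hf : fM E M i = j := inl_f E hM hMem
    have hg : gM E M j = i := inl_g E hM hMem
    refine ⟨⟨hE, Or.inl ⟨rfl, hf.ge⟩, Or.inl ⟨rfl, hg.ge⟩, by simp, by simp⟩,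
      ⟨hE, Or.inl ⟨rfl, hf.ge⟩, Or.inr ⟨rfl, hg.le⟩, by simp, by simp [hMem]⟩,
      ⟨hE, Or.inr ⟨rfl, hf.le⟩, Or.inr ⟨rfl, hg.le⟩, by simp, by simp⟩,
      fun h => h.2.2.2.1 ⟨rfl, rfl, hMem⟩⟩

lemma psi_phi {M : Set WEdge} (hM : IsMatching E M) : Psi E (Phi E M) = M := by
  ext w
  rcases w with e | p | q
  · simp only [Psi, Set.mem_setOf_eq]
    constructor
    · rintro ⟨-, hec⟩
      exact (edgeCond_phi E hM e).mp hec
    · intro hMem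
      exact ⟨hM.1 _ hMem, (edgeCond_phi E hM e).mpr hMem⟩
  · obtain ⟨i, j⟩ := p
    simp only [Psi, Set.mem_setOf_eq]
    constructor
    · rintro ⟨hE, ⟨j', hj', hj'lt⟩, ⟨c₁, hc₁⟩, ⟨c₂, hc₂⟩, hnec⟩
      have hf : fM E M i = j :=
        le_antisymm (aOK2 hc₂.2.1 rfl) (aOK1 hc₁.2.1 rfl)
      have hInl : Sum.inl (i, j) ∉ M := fun h => hnec ((edgeCond_phi E hM (i, j)).mpr h)
      rw [fM] at hf
      split at hf
      · next hex =>
        have hspec := hex.choose_spec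
        rw [hf] at hspec
        rcases hspec with h | h
        · exact absurd h hInl
        · exact h
      · exfalso
        rw [minN, dif_pos ⟨j, mem_nbr.mpr hE⟩] at hf
        have := (Nbr E i).min'_le j' hj'
        omega
    · intro hMem
      obtain ⟨hE, hjmin⟩ : (i, j) ∈ E ∧ ∃ j' ∈ Nbr E i, j' < j := hM.1 _ hMem
      have hf : fM E M i = j := fM_eq E hM (Or.inr hMem)
      have hInl : Sum.inl (i, j) ∉ M := by
        intro h
        have := left_unique E hM h hMem rfl rfl
        simp at this
      refine ⟨hE, hjmin, ⟨if i ≤ gM E M j then 1 else 2, ?_⟩,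
        ⟨if gM E M j ≤ i then 2 else 1, ?_⟩,
        fun hec => hInl ((edgeCond_phi E hM (i, j)).mp hec)⟩
      · split
        · next hg => exact ⟨hE, Or.inl ⟨rfl, hf.ge⟩, Or.inl ⟨rfl, hg⟩, by simp, by simp⟩
        · next hg =>
          exact ⟨hE, Or.inl ⟨rfl, hf.ge⟩, Or.inr ⟨rfl, (not_le.mp hg).le⟩, by simp,
            fun h => hg h.2.2.2.2.ge⟩
      · split
        · next hg => exact ⟨hE, Or.inr ⟨rfl, hf.le⟩, Or.inr ⟨rfl, hg⟩, by simp, by simp⟩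
        · next hg =>
          exact ⟨hE, Or.inr ⟨rfl, hf.le⟩, Or.inl ⟨rfl, (not_le.mp hg).le⟩,
            fun h => hInl h.2.2, by simp⟩
  · obtain ⟨j, i⟩ := q
    simp only [Psi, Set.mem_setOf_eq]
    constructor
    · rintro ⟨hE, ⟨i', hi', hi'lt⟩, ⟨a₁, ha₁⟩, ⟨a₂, ha₂⟩, hnec⟩
      have hg : gM E M j = i :=
        le_antisymm (cOK2 ha₂.2.2.1 rfl) (cOK1 ha₁.2.2.1 rfl)
      have hInl : Sum.inl (i, j) ∉ M := fun h => hnec ((edgeCond_phi E hM (i, j)).mpr h)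
      rw [gM] at hg
      split at hg
      · next hex =>
        have hspec := hex.choose_spec
        rw [hg] at hspec
        rcases hspec with h | h
        · exact absurd h hInl
        · exact h
      · exfalso
        rw [maxN, dif_pos ⟨i, mem_nbr'.mpr hE⟩] at hg
        have := (Nbr' E j).le_max' i' hi'
        omega
    · intro hMem
      obtain ⟨hE, himax⟩ : (i, j) ∈ E ∧ ∃ i' ∈ Nbr' E j, i < i' := hM.1 _ hMem
      have hg : gM E M j = i := gM_eq E hM (Or.inr hMem)
      have hInl : Sum.inl (i, j) ∉ M := by
        intro h
        have := right_unique E hM h hMem rfl rfl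
        simp at this
      refine ⟨hE, himax, ⟨if j ≤ fM E M i then 1 else 2, ?_⟩,
        ⟨if fM E M i ≤ j then 2 else 1, ?_⟩,
        fun hec => hInl ((edgeCond_phi E hM (i, j)).mp hec)⟩
      · split
        · next hff => exact ⟨hE, Or.inl ⟨rfl, hff⟩, Or.inl ⟨rfl, hg.ge⟩, by simp, by simp⟩
        · next hff =>
          exact ⟨hE, Or.inr ⟨rfl, (not_le.mp hff).le⟩, Or.inl ⟨rfl, hg.ge⟩,
            fun h => hInl h.2.2, by simp⟩
      · split
        · next hff => exact ⟨hE, Or.inr ⟨rfl, hff⟩, Or.inr ⟨rfl, hg.le⟩, by simp, by simp⟩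
        · next hff =>
          exact ⟨hE, Or.inl ⟨rfl, (not_le.mp hff).le⟩, Or.inr ⟨rfl, hg.le⟩, by simp,
            fun h => hff h.2.2.2.1.le⟩

lemma doubledL {C : Set Route} (hC : IsMaxClique E C) {i j : ℕ} (hij : (i, j) ∈ E) :
    ∃ j₀, (i, j₀) ∈ E ∧ (∃ c, (1, (i, j₀), c) ∈ C) ∧ (∃ c, (2, (i, j₀), c) ∈ C) := by
  classical
  set P := (Nbr E i).filter (fun j' => ∃ c, (1, (i, j'), c) ∈ C) with hPdef
  by_cases hPne : P.Nonempty
  · set js := P.max' hPne with hjs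
    have hjsP : js ∈ P := P.max'_mem hPne
    have hjsE : (i, js) ∈ E := mem_nbr.mp (Finset.mem_filter.mp hjsP).1
    have hjs1 : ∃ c, (1, (i, js), c) ∈ C := (Finset.mem_filter.mp hjsP).2
    refine ⟨js, hjsE, hjs1, ?_⟩
    by_contra hn2
    push_neg at hn2
    have hmax : ∀ j₂ c₂, (1, (i, j₂), c₂) ∈ C → j₂ ≤ js := by
      intro j₂ c₂ h2
      exact P.le_max' j₂ (Finset.mem_filter.mpr ⟨mem_nbr.mpr (hC.1.1 _ h2).2.1, ⟨c₂, h2⟩⟩)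
    obtain ⟨rA, hrA, hconfA⟩ := ext_conflict E hC (r := (2, (i, js), 2))
      ⟨Or.inr rfl, hjsE, Or.inr rfl⟩ (hn2 2)
    obtain ⟨a₂, ⟨i₂, j₂⟩, c₂⟩ := rA
    rcases conflict_elim hconfA with ⟨he, hp⟩ | ⟨hi2, hp⟩ | ⟨hj2, hp⟩
    · dsimp only at hp; omega
    · dsimp only at hi2 hp
      subst hi2
      rcases hp with ⟨hlt, h1, -⟩ | ⟨-, h0, -⟩
      · subst h1; exact absurd (hmax j₂ c₂ hrA) (by omega)
      · omega
    · dsimp only at hj2 hp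
      subst hj2
      rcases hp with ⟨hlt, -, hc1⟩ | ⟨-, -, h0⟩
      · subst hc1
        obtain ⟨rB, hrB, hconfB⟩ := ext_conflict E hC (r := (2, (i, js), 1))
          ⟨Or.inr rfl, hjsE, Or.inl rfl⟩ (hn2 1)
        obtain ⟨a₃, ⟨i₃, j₃⟩, c₃⟩ := rB
        rcases conflict_elim hconfB with ⟨he3, hp3⟩ | ⟨hi3, hp3⟩ | ⟨hj3, hp3⟩
        · dsimp only at he3 hp3
          rcases hp3 with ⟨h0, -⟩ | ⟨-, -, ha3, hc3⟩
          · omega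
          · simp only [Prod.mk.injEq] at he3
            obtain ⟨rfl, rfl⟩ := he3
            subst ha3; subst hc3
            exact clique_R E hC.1 hrB hrA hlt
        · dsimp only at hi3 hp3
          subst hi3
          rcases hp3 with ⟨hlt3, h1, -⟩ | ⟨-, h0, -⟩
          · subst h1; exact absurd (hmax j₃ c₃ hrB) (by omega)
          · omega
        · dsimp only at hj3 hp3
          subst hj3
          rcases hp3 with ⟨-, h0, -⟩ | ⟨hlt3, hc3, -⟩
          · omega
          · subst hc3
            exact clique_R E hC.1 hrB hrA (by omega)
      · omega
  · exfalso
    have hno1 : ∀ j₂ c₂, (1, (i, j₂), c₂) ∈ C → False := by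
      intro j₂ c₂ h2
      exact hPne ⟨j₂, Finset.mem_filter.mpr ⟨mem_nbr.mpr (hC.1.1 _ h2).2.1, ⟨c₂, h2⟩⟩⟩
    have hNne : (Nbr E i).Nonempty := ⟨j, mem_nbr.mpr hij⟩
    set js := (Nbr E i).min' hNne with hjs
    have hjsE : (i, js) ∈ E := mem_nbr.mp ((Nbr E i).min'_mem hNne)
    have hmin : ∀ a₂ j₂ c₂, (a₂, (i, j₂), c₂) ∈ C → js ≤ j₂ := by
      intro a₂ j₂ c₂ h2
      exact (Nbr E i).min'_le j₂ (mem_nbr.mpr (hC.1.1 _ h2).2.1)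
    obtain ⟨rA, hrA, hconfA⟩ := ext_conflict E hC (r := (1, (i, js), 1))
      ⟨Or.inl rfl, hjsE, Or.inl rfl⟩ (fun h => hno1 _ _ h)
    obtain ⟨a₂, ⟨i₂, j₂⟩, c₂⟩ := rA
    rcases conflict_elim hconfA with ⟨he, hp⟩ | ⟨hi2, hp⟩ | ⟨hj2, hp⟩
    · dsimp only at hp; omega
    · dsimp only at hi2 hp
      subst hi2
      rcases hp with ⟨-, -, h0⟩ | ⟨hlt, -, -⟩
      · omega
      · exact absurd (hmin a₂ j₂ c₂ hrA) (by omega)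
    · dsimp only at hj2 hp
      subst hj2
      rcases hp with ⟨-, h0, -⟩ | ⟨hlt, hc2, -⟩
      · omega
      · subst hc2
        obtain ⟨rB, hrB, hconfB⟩ := ext_conflict E hC (r := (1, (i, js), 2))
          ⟨Or.inl rfl, hjsE, Or.inr rfl⟩ (fun h => hno1 _ _ h)
        obtain ⟨a₃, ⟨i₃, j₃⟩, c₃⟩ := rB
        rcases conflict_elim hconfB with ⟨he3, hp3⟩ | ⟨hi3, hp3⟩ | ⟨hj3, hp3⟩
        · dsimp only at he3 hp3
          rcases hp3 with ⟨-, -, ha3, hc3⟩ | ⟨h0, -⟩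
          · simp only [Prod.mk.injEq] at he3
            obtain ⟨rfl, rfl⟩ := he3
            subst ha3; subst hc3
            exact clique_R E hC.1 hrA hrB hlt
          · omega
        · dsimp only at hi3 hp3
          subst hi3
          rcases hp3 with ⟨-, -, h0⟩ | ⟨hlt3, -, -⟩
          · omega
          · exact absurd (hmin a₃ j₃ c₃ hrB) (by omega)
        · dsimp only at hj3 hp3
          subst hj3
          rcases hp3 with ⟨hlt3, -, hc3⟩ | ⟨-, hc3, h0⟩
          · subst hc3
            exact clique_R E hC.1 hrA hrB (by omega)
          · omega

lemma doubledR {C : Set Route} (hC : IsMaxClique E C) {i j : ℕ} (hij : (i, j) ∈ E) :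
    ∃ i₀, (i₀, j) ∈ E ∧ (∃ a, (a, (i₀, j), 1) ∈ C) ∧ (∃ a, (a, (i₀, j), 2) ∈ C) := by
  classical
  set Q := (Nbr' E j).filter (fun i' => ∃ a, (a, (i', j), 1) ∈ C) with hQdef
  by_cases hQne : Q.Nonempty
  · set is := Q.max' hQne with his
    have hisQ : is ∈ Q := Q.max'_mem hQne
    have hisE : (is, j) ∈ E := mem_nbr'.mp (Finset.mem_filter.mp hisQ).1
    have his1 : ∃ a, (a, (is, j), 1) ∈ C := (Finset.mem_filter.mp hisQ).2
    refine ⟨is, hisE, his1, ?_⟩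
    by_contra hn2
    push_neg at hn2
    have hmax : ∀ i₂ a₂, (a₂, (i₂, j), 1) ∈ C → i₂ ≤ is := by
      intro i₂ a₂ h2
      exact Q.le_max' i₂ (Finset.mem_filter.mpr ⟨mem_nbr'.mpr (hC.1.1 _ h2).2.1, ⟨a₂, h2⟩⟩)
    obtain ⟨rA, hrA, hconfA⟩ := ext_conflict E hC (r := (2, (is, j), 2))
      ⟨Or.inr rfl, hisE, Or.inr rfl⟩ (hn2 2)
    obtain ⟨a₂, ⟨i₂, j₂⟩, c₂⟩ := rA
    rcases conflict_elim hconfA with ⟨he, hp⟩ | ⟨hi2, hp⟩ | ⟨hj2, hp⟩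
    · dsimp only at hp; omega
    · dsimp only at hi2 hp
      subst hi2
      rcases hp with ⟨hlt, h1, -⟩ | ⟨-, h0, -⟩
      · subst h1
        obtain ⟨rB, hrB, hconfB⟩ := ext_conflict E hC (r := (1, (is, j), 2))
          ⟨Or.inl rfl, hisE, Or.inr rfl⟩ (hn2 1)
        obtain ⟨a₃, ⟨i₃, j₃⟩, c₃⟩ := rB
        rcases conflict_elim hconfB with ⟨he3, hp3⟩ | ⟨hi3, hp3⟩ | ⟨hj3, hp3⟩
        · dsimp only at he3 hp3
          rcases hp3 with ⟨-, -, ha3, hc3⟩ | ⟨h0, -⟩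
          · simp only [Prod.mk.injEq] at he3
            obtain ⟨rfl, rfl⟩ := he3
            subst ha3; subst hc3
            exact clique_L E hC.1 hrB hrA hlt
          · omega
        · dsimp only at hi3 hp3
          subst hi3
          rcases hp3 with ⟨-, -, h0⟩ | ⟨hlt3, -, ha3⟩
          · omega
          · subst ha3
            exact clique_L E hC.1 hrB hrA (by omega)
        · dsimp only at hj3 hp3
          subst hj3
          rcases hp3 with ⟨hlt3, -, hc3⟩ | ⟨-, -, h0⟩
          · subst hc3
            exact absurd (hmax i₃ a₃ hrB) (by omega)
          · omega
      · omega
    · dsimp only at hj2 hp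
      rcases hp with ⟨hlt, -, hc1⟩ | ⟨-, -, h0⟩
      · subst hj2
        subst hc1
        exact absurd (hmax i₂ a₂ hrA) (by omega)
      · omega
  · exfalso
    have hno1 : ∀ a₂ i₂, (a₂, (i₂, j), 1) ∈ C → False := by
      intro a₂ i₂ h2
      exact hQne ⟨i₂, Finset.mem_filter.mpr ⟨mem_nbr'.mpr (hC.1.1 _ h2).2.1, ⟨a₂, h2⟩⟩⟩
    have hNne : (Nbr' E j).Nonempty := ⟨i, mem_nbr'.mpr hij⟩
    set is := (Nbr' E j).min' hNne with his
    have hisE : (is, j) ∈ E := mem_nbr'.mp ((Nbr' E j).min'_mem hNne)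
    have hmin : ∀ a₂ i₂ c₂, (a₂, (i₂, j), c₂) ∈ C → is ≤ i₂ := by
      intro a₂ i₂ c₂ h2
      exact (Nbr' E j).min'_le i₂ (mem_nbr'.mpr (hC.1.1 _ h2).2.1)
    obtain ⟨rA, hrA, hconfA⟩ := ext_conflict E hC (r := (1, (is, j), 1))
      ⟨Or.inl rfl, hisE, Or.inl rfl⟩ (fun h => hno1 _ _ h)
    obtain ⟨a₂, ⟨i₂, j₂⟩, c₂⟩ := rA
    rcases conflict_elim hconfA with ⟨he, hp⟩ | ⟨hi2, hp⟩ | ⟨hj2, hp⟩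
    · dsimp only at hp; omega
    · dsimp only at hi2 hp
      subst hi2
      rcases hp with ⟨-, -, h0⟩ | ⟨hlt, -, ha2⟩
      · omega
      · subst ha2
        obtain ⟨rB, hrB, hconfB⟩ := ext_conflict E hC (r := (2, (is, j), 1))
          ⟨Or.inr rfl, hisE, Or.inl rfl⟩ (fun h => hno1 _ _ h)
        obtain ⟨a₃, ⟨i₃, j₃⟩, c₃⟩ := rB
        rcases conflict_elim hconfB with ⟨he3, hp3⟩ | ⟨hi3, hp3⟩ | ⟨hj3, hp3⟩
        · dsimp only at he3 hp3
          rcases hp3 with ⟨h0, -⟩ | ⟨-, -, ha3, hc3⟩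
          · omega
          · simp only [Prod.mk.injEq] at he3
            obtain ⟨rfl, rfl⟩ := he3
            subst ha3; subst hc3
            exact clique_L E hC.1 hrA hrB hlt
        · dsimp only at hi3 hp3
          subst hi3
          rcases hp3 with ⟨hlt3, ha3, -⟩ | ⟨-, h0, -⟩
          · subst ha3
            exact clique_L E hC.1 hrA hrB (by omega)
          · omega
        · dsimp only at hj3 hp3
          subst hj3
          rcases hp3 with ⟨-, h0, -⟩ | ⟨hlt3, -, -⟩
          · omega
          · exact absurd (hmin a₃ i₃ c₃ hrB) (by omega)
    · dsimp only at hj2 hp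
      subst hj2
      rcases hp with ⟨-, h0, -⟩ | ⟨hlt, -, -⟩
      · omega
      · exact absurd (hmin a₂ i₂ c₂ hrA) (by omega)

lemma doubled_uniqueL {C : Set Route} (hCl : IsClique E C) {i j j' c₁ c₂ d₁ d₂ : ℕ}
    (h1 : (1, (i, j), c₁) ∈ C) (h2 : (2, (i, j), c₂) ∈ C)
    (h1' : (1, (i, j'), d₁) ∈ C) (h2' : (2, (i, j'), d₂) ∈ C) : j = j' := by
  rcases lt_trichotomy j j' with h | h | h
  · exact (clique_L E hCl h2 h1' h).elim
  · exact h
  · exact (clique_L E hCl h2' h1 h).elim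

lemma doubled_uniqueR {C : Set Route} (hCl : IsClique E C) {i i' j x₁ x₂ y₁ y₂ : ℕ}
    (h1 : (x₁, (i, j), 1) ∈ C) (h2 : (x₂, (i, j), 2) ∈ C)
    (h1' : (y₁, (i', j), 1) ∈ C) (h2' : (y₂, (i', j), 2) ∈ C) : i = i' := by
  rcases lt_trichotomy i i' with h | h | h
  · exact (clique_R E hCl h2 h1' h).elim
  · exact h
  · exact (clique_R E hCl h2' h1 h).elim

lemma fPsi_eq {C : Set Route} (hC : IsMaxClique E C) {i j c₁ c₂ : ℕ}
    (hij : (i, j) ∈ E) (h1 : (1, (i, j), c₁) ∈ C) (h2 : (2, (i, j), c₂) ∈ C) :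
    fM E (Psi E C) i = j := by
  rw [fM]
  split
  · next hex =>
    obtain h | h := hex.choose_spec
    · have h' : (i, hex.choose) ∈ E ∧ edgeCond C (i, hex.choose) := h
      obtain ⟨-, h11, -, h22, -⟩ := h'
      exact doubled_uniqueL E hC.1 h11 h22 h1 h2
    · have h' : (i, hex.choose) ∈ E ∧ (∃ j' ∈ Nbr E i, j' < hex.choose) ∧
        (∃ c, (1, (i, hex.choose), c) ∈ C) ∧ (∃ c, (2, (i, hex.choose), c) ∈ C) ∧
        ¬ edgeCond C (i, hex.choose) := h
      obtain ⟨-, -, ⟨d₁, hd1⟩, ⟨d₂, hd2⟩, -⟩ := h'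
      exact doubled_uniqueL E hC.1 hd1 hd2 h1 h2
  · next hex =>
    have hjN : j ∈ Nbr E i := mem_nbr.mpr hij
    rw [minN, dif_pos ⟨j, hjN⟩]
    by_contra hne
    have hminlt : (Nbr E i).min' ⟨j, hjN⟩ < j :=
      lt_of_le_of_ne ((Nbr E i).min'_le j hjN) hne
    by_cases hec : edgeCond C (i, j)
    · exact hex ⟨j, Or.inl (⟨hij, hec⟩ : (i, j) ∈ E ∧ edgeCond C (i, j))⟩
    · exact hex ⟨j, Or.inr (⟨hij, ⟨_, (Nbr E i).min'_mem _, hminlt⟩, ⟨c₁, h1⟩, ⟨c₂, h2⟩, hec⟩ :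
        (i, j) ∈ E ∧ (∃ j' ∈ Nbr E i, j' < j) ∧ (∃ c, (1, (i, j), c) ∈ C) ∧
          (∃ c, (2, (i, j), c) ∈ C) ∧ ¬ edgeCond C (i, j))⟩

lemma gPsi_eq {C : Set Route} (hC : IsMaxClique E C) {i j a₁ a₂ : ℕ}
    (hij : (i, j) ∈ E) (h1 : (a₁, (i, j), 1) ∈ C) (h2 : (a₂, (i, j), 2) ∈ C) :
    gM E (Psi E C) j = i := by
  rw [gM]
  split
  · next hex =>
    obtain h | h := hex.choose_spec
    · have h' : (hex.choose, j) ∈ E ∧ edgeCond C (hex.choose, j) := h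
      obtain ⟨-, h11, h12, -, -⟩ := h'
      exact doubled_uniqueR E hC.1 h11 h12 h1 h2
    · have h' : (hex.choose, j) ∈ E ∧ (∃ i' ∈ Nbr' E j, hex.choose < i') ∧
        (∃ a, (a, (hex.choose, j), 1) ∈ C) ∧ (∃ a, (a, (hex.choose, j), 2) ∈ C) ∧
        ¬ edgeCond C (hex.choose, j) := h
      obtain ⟨-, -, ⟨d₁, hd1⟩, ⟨d₂, hd2⟩, -⟩ := h'
      exact doubled_uniqueR E hC.1 hd1 hd2 h1 h2
  · next hex =>
    have hiN : i ∈ Nbr' E j := mem_nbr'.mpr hij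
    rw [maxN, dif_pos ⟨i, hiN⟩]
    by_contra hne
    have hmaxlt : i < (Nbr' E j).max' ⟨i, hiN⟩ :=
      lt_of_le_of_ne ((Nbr' E j).le_max' i hiN) (fun h => hne h.symm)
    by_cases hec : edgeCond C (i, j)
    · exact hex ⟨i, Or.inl (⟨hij, hec⟩ : (i, j) ∈ E ∧ edgeCond C (i, j))⟩
    · exact hex ⟨i, Or.inr (⟨hij, ⟨_, (Nbr' E j).max'_mem _, hmaxlt⟩, ⟨a₁, h1⟩, ⟨a₂, h2⟩, hec⟩ :
        (i, j) ∈ E ∧ (∃ i' ∈ Nbr' E j, i < i') ∧ (∃ a, (a, (i, j), 1) ∈ C) ∧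
          (∃ a, (a, (i, j), 2) ∈ C) ∧ ¬ edgeCond C (i, j))⟩

lemma full_11 {C : Set Route} (hC : IsMaxClique E C) {i j c₁ c₂ a₁ a₂ : ℕ} (hij : (i, j) ∈ E)
    (hd1 : (1, (i, j), c₁) ∈ C) (hd2 : (2, (i, j), c₂) ∈ C)
    (he1 : (a₁, (i, j), 1) ∈ C) (he2 : (a₂, (i, j), 2) ∈ C) :
    (1, (i, j), 1) ∈ C ∧ (2, (i, j), 2) ∈ C := by
  constructor
  · by_contra hn
    obtain ⟨r', hr', hconf⟩ := ext_conflict E hC ⟨Or.inl rfl, hij, Or.inl rfl⟩ hn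
    obtain ⟨a₃, ⟨i₃, j₃⟩, c₃⟩ := r'
    rcases conflict_elim hconf with ⟨he, hp⟩ | ⟨hi3, hp⟩ | ⟨hj3, hp⟩
    · dsimp only at hp; omega
    · dsimp only at hi3 hp
      subst hi3
      rcases hp with ⟨-, -, h0⟩ | ⟨hlt, -, ha3⟩
      · omega
      · subst ha3
        exact clique_L E hC.1 hr' hd1 hlt
    · dsimp only at hj3 hp
      subst hj3
      rcases hp with ⟨-, h0, -⟩ | ⟨hlt, hc3, -⟩
      · omega
      · subst hc3
        exact clique_R E hC.1 hr' he1 hlt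
  · by_contra hn
    obtain ⟨r', hr', hconf⟩ := ext_conflict E hC ⟨Or.inr rfl, hij, Or.inr rfl⟩ hn
    obtain ⟨a₃, ⟨i₃, j₃⟩, c₃⟩ := r'
    rcases conflict_elim hconf with ⟨he, hp⟩ | ⟨hi3, hp⟩ | ⟨hj3, hp⟩
    · dsimp only at hp; omega
    · dsimp only at hi3 hp
      subst hi3
      rcases hp with ⟨hlt, ha3, -⟩ | ⟨-, h0, -⟩
      · subst ha3
        exact clique_L E hC.1 hd2 hr' hlt
      · omega
    · dsimp only at hj3 hp
      subst hj3
      rcases hp with ⟨hlt, -, hc3⟩ | ⟨-, -, h0⟩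
      · subst hc3
        exact clique_R E hC.1 he2 hr' hlt
      · omega

lemma psi_left_char {C : Set Route} {w : WEdge} {i : ℕ}
    (hw : w ∈ Psi E C) (h : leftV w = some i) :
    ∃ j, (∃ c, (1, (i, j), c) ∈ C) ∧ (∃ c, (2, (i, j), c) ∈ C) ∧
      ((w = Sum.inl (i, j) ∧ edgeCond C (i, j)) ∨
        (w = Sum.inr (Sum.inl (i, j)) ∧ ¬ edgeCond C (i, j))) := by
  rcases w with ⟨i₀, j₀⟩ | ⟨i₀, j₀⟩ | q
  · have hi : i₀ = i := by simpa [leftV] using h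
    subst hi
    have hw' : (i₀, j₀) ∈ E ∧ edgeCond C (i₀, j₀) := hw
    exact ⟨j₀, ⟨1, hw'.2.1⟩, ⟨2, hw'.2.2.2.1⟩, Or.inl ⟨rfl, hw'.2⟩⟩
  · have hi : i₀ = i := by simpa [leftV] using h
    subst hi
    have hw' : (i₀, j₀) ∈ E ∧ (∃ j' ∈ Nbr E i₀, j' < j₀) ∧
        (∃ c, (1, (i₀, j₀), c) ∈ C) ∧ (∃ c, (2, (i₀, j₀), c) ∈ C) ∧
        ¬ edgeCond C (i₀, j₀) := hw
    exact ⟨j₀, hw'.2.2.1, hw'.2.2.2.1, Or.inr ⟨rfl, hw'.2.2.2.2⟩⟩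
  · simp [leftV] at h

lemma psi_right_char {C : Set Route} {w : WEdge} {j : ℕ}
    (hw : w ∈ Psi E C) (h : rightV w = some j) :
    ∃ i, (∃ a, (a, (i, j), 1) ∈ C) ∧ (∃ a, (a, (i, j), 2) ∈ C) ∧
      ((w = Sum.inl (i, j) ∧ edgeCond C (i, j)) ∨
        (w = Sum.inr (Sum.inr (j, i)) ∧ ¬ edgeCond C (i, j))) := by
  rcases w with ⟨i₀, j₀⟩ | p | ⟨j₀, i₀⟩
  · have hj : j₀ = j := by simpa [rightV] using h
    subst hj
    have hw' : (i₀, j₀) ∈ E ∧ edgeCond C (i₀, j₀) := hw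
    exact ⟨i₀, ⟨1, hw'.2.1⟩, ⟨1, hw'.2.2.1⟩, Or.inl ⟨rfl, hw'.2⟩⟩
  · simp [rightV] at h
  · have hj : j₀ = j := by simpa [rightV] using h
    subst hj
    have hw' : (i₀, j₀) ∈ E ∧ (∃ i' ∈ Nbr' E j₀, i₀ < i') ∧
        (∃ a, (a, (i₀, j₀), 1) ∈ C) ∧ (∃ a, (a, (i₀, j₀), 2) ∈ C) ∧
        ¬ edgeCond C (i₀, j₀) := hw
    exact ⟨i₀, hw'.2.2.1, hw'.2.2.2.1, Or.inr ⟨rfl, hw'.2.2.2.2⟩⟩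

lemma psi_left_inj {C : Set Route} (hC : IsMaxClique E C) {w w' : WEdge} {i : ℕ}
    (hw : w ∈ Psi E C) (hw' : w' ∈ Psi E C) (h : leftV w = some i)
    (h' : leftV w' = some i) : w = w' := by
  obtain ⟨j, ⟨c₁, hd1⟩, ⟨c₂, hd2⟩, hcase⟩ := psi_left_char E hw h
  obtain ⟨j', ⟨d₁, hd1'⟩, ⟨d₂, hd2'⟩, hcase'⟩ := psi_left_char E hw' h'
  have hj : j = j' := doubled_uniqueL E hC.1 hd1 hd2 hd1' hd2'
  subst hj
  rcases hcase with ⟨rfl, hec⟩ | ⟨rfl, hec⟩ <;> rcases hcase' with ⟨rfl, hec'⟩ | ⟨rfl, hec'⟩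
  · rfl
  · exact absurd hec hec'
  · exact absurd hec' hec
  · rfl

lemma psi_right_inj {C : Set Route} (hC : IsMaxClique E C) {w w' : WEdge} {j : ℕ}
    (hw : w ∈ Psi E C) (hw' : w' ∈ Psi E C) (h : rightV w = some j)
    (h' : rightV w' = some j) : w = w' := by
  obtain ⟨i, ⟨x₁, hd1⟩, ⟨x₂, hd2⟩, hcase⟩ := psi_right_char E hw h
  obtain ⟨i', ⟨y₁, hd1'⟩, ⟨y₂, hd2'⟩, hcase'⟩ := psi_right_char E hw' h'
  have hi : i = i' := doubled_uniqueR E hC.1 hd1 hd2 hd1' hd2'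
  subst hi
  rcases hcase with ⟨rfl, hec⟩ | ⟨rfl, hec⟩ <;> rcases hcase' with ⟨rfl, hec'⟩ | ⟨rfl, hec'⟩
  · rfl
  · exact absurd hec hec'
  · exact absurd hec' hec
  · rfl

lemma psi_matching {C : Set Route} (hC : IsMaxClique E C) : IsMatching E (Psi E C) := by
  constructor
  · rintro (e | p | q) hw
    · exact (hw : e ∈ E ∧ _).1
    · obtain ⟨h1, h2, -⟩ : p ∈ E ∧ (∃ j' ∈ Nbr E p.1, j' < p.2) ∧ _ := hw
      exact ⟨h1, h2⟩
    · obtain ⟨h1, h2, -⟩ : (q.2, q.1) ∈ E ∧ (∃ i' ∈ Nbr' E q.1, q.2 < i') ∧ _ := hw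
      exact ⟨h1, h2⟩
  · intro e he e' he' hne
    constructor
    · cases hl : leftV e with
      | none => exact Or.inl rfl
      | some i =>
        exact Or.inr (fun heq => hne (psi_left_inj E hC he he' hl heq.symm))
    · cases hl : rightV e with
      | none => exact Or.inl rfl
      | some j =>
        exact Or.inr (fun heq => hne (psi_right_inj E hC he he' hl heq.symm))

lemma C_a1 {C : Set Route} (hC : IsMaxClique E C) {a i j c : ℕ}
    (hr : (a, (i, j), c) ∈ C) (ha : a = 1) : j ≤ fM E (Psi E C) i := by
  obtain ⟨jd, hjdE, ⟨d₁, hd1⟩, ⟨d₂, hd2⟩⟩ := doubledL E hC (hC.1.1 _ hr).2.1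
  rw [fPsi_eq E hC hjdE hd1 hd2]
  subst ha
  by_contra hlt
  exact clique_L E hC.1 hd2 hr (by omega)

lemma C_a2 {C : Set Route} (hC : IsMaxClique E C) {a i j c : ℕ}
    (hr : (a, (i, j), c) ∈ C) (ha : a = 2) : fM E (Psi E C) i ≤ j := by
  obtain ⟨jd, hjdE, ⟨d₁, hd1⟩, ⟨d₂, hd2⟩⟩ := doubledL E hC (hC.1.1 _ hr).2.1
  rw [fPsi_eq E hC hjdE hd1 hd2]
  subst ha
  by_contra hlt
  exact clique_L E hC.1 hr hd1 (by omega)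

lemma C_c1 {C : Set Route} (hC : IsMaxClique E C) {a i j c : ℕ}
    (hr : (a, (i, j), c) ∈ C) (hc : c = 1) : i ≤ gM E (Psi E C) j := by
  obtain ⟨id, hidE, ⟨b₁, hb1⟩, ⟨b₂, hb2⟩⟩ := doubledR E hC (hC.1.1 _ hr).2.1
  rw [gPsi_eq E hC hidE hb1 hb2]
  subst hc
  by_contra hlt
  exact clique_R E hC.1 hb2 hr (by omega)

lemma C_c2 {C : Set Route} (hC : IsMaxClique E C) {a i j c : ℕ}
    (hr : (a, (i, j), c) ∈ C) (hc : c = 2) : gM E (Psi E C) j ≤ i := by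
  obtain ⟨id, hidE, ⟨b₁, hb1⟩, ⟨b₂, hb2⟩⟩ := doubledR E hC (hC.1.1 _ hr).2.1
  rw [gPsi_eq E hC hidE hb1 hb2]
  subst hc
  by_contra hlt
  exact clique_R E hC.1 hr hb1 (by omega)

lemma phi_psi {C : Set Route} (hC : IsMaxClique E C) : Phi E (Psi E C) = C := by
  apply Set.Subset.antisymm
  · rintro ⟨a, ⟨i, j⟩, c⟩ hr
    obtain ⟨hE, ha, hcc, hx1, hx2⟩ := hr
    dsimp only at hE ha hcc hx1 hx2
    have ha12 : a = 1 ∨ a = 2 := by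
      rcases ha with ⟨h, -⟩ | ⟨h, -⟩
      · exact Or.inl h
      · exact Or.inr h
    have hc12 : c = 1 ∨ c = 2 := by
      rcases hcc with ⟨h, -⟩ | ⟨h, -⟩
      · exact Or.inl h
      · exact Or.inr h
    by_contra hn
    obtain ⟨r', hr', hconf⟩ := ext_conflict E hC ⟨ha12, hE, hc12⟩ hn
    obtain ⟨a₃, ⟨i₃, j₃⟩, c₃⟩ := r'
    rcases conflict_elim hconf with ⟨he, hp⟩ | ⟨hi3, hp⟩ | ⟨hj3, hp⟩
    · dsimp only at he hp
      simp only [Prod.mk.injEq] at he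
      obtain ⟨h1e, h2e⟩ := he
      subst h1e; subst h2e
      rcases hp with ⟨ha1, hc2, ha3, hc3⟩ | ⟨ha2, hc1, ha3, hc3⟩
      · subst ha3; subst hc3
        have hf : fM E (Psi E C) i = j := le_antisymm (C_a2 E hC hr' rfl) (aOK1 ha ha1)
        have hg : gM E (Psi E C) j = i := le_antisymm (cOK2 hcc hc2) (C_c1 E hC hr' rfl)
        refine hx2 ⟨ha1, hc2, ?_, hf, hg⟩
        intro hmem
        have hmem' : (i, j) ∈ E ∧ edgeCond C (i, j) := hmem
        exact hmem'.2.2.2.2 hr'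
      · subst ha3; subst hc3
        have hf : fM E (Psi E C) i = j := le_antisymm (aOK2 ha ha2) (C_a1 E hC hr' rfl)
        have hg : gM E (Psi E C) j = i := le_antisymm (C_c2 E hC hr' rfl) (cOK1 hcc hc1)
        obtain ⟨jd, hjdE, ⟨d₁, hd1⟩, ⟨d₂, hd2⟩⟩ := doubledL E hC hE
        have hjd : jd = j := (fPsi_eq E hC hjdE hd1 hd2).symm.trans hf
        rw [hjd] at hd1 hd2
        obtain ⟨id, hidE, ⟨b₁, hb1⟩, ⟨b₂, hb2⟩⟩ := doubledR E hC hE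
        have hid : id = i := (gPsi_eq E hC hidE hb1 hb2).symm.trans hg
        rw [hid] at hb1 hb2
        obtain ⟨h11, h22⟩ := full_11 E hC hE hd1 hd2 hb1 hb2
        have h21 : (2, (i, j), 1) ∉ C := fun h => clique_E E hC.1 hr' h
        exact hx1 ⟨ha2, hc1, (⟨hE, h11, hr', h22, h21⟩ :
          (i, j) ∈ E ∧ edgeCond C (i, j))⟩
    · dsimp only at hi3 hp
      subst hi3
      rcases hp with ⟨hlt, ha3, ha2⟩ | ⟨hlt, ha1, ha3⟩
      · have h1 := C_a1 E hC hr' ha3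
        have h2 := aOK2 ha ha2
        omega
      · have h1 := C_a2 E hC hr' ha3
        have h2 := aOK1 ha ha1
        omega
    · dsimp only at hj3 hp
      subst hj3
      rcases hp with ⟨hlt, hc2, hc3⟩ | ⟨hlt, hc3, hc1⟩
      · have h1 := C_c1 E hC hr' hc3
        have h2 := cOK2 hcc hc2
        omega
      · have h1 := C_c2 E hC hr' hc3
        have h2 := cOK1 hcc hc1
        omega
  · rintro ⟨a, ⟨i, j⟩, c⟩ hr
    obtain ⟨ha12, hE, hc12⟩ := hC.1.1 _ hr
    dsimp only at ha12 hE hc12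
    refine ⟨hE, ?_, ?_, ?_, ?_⟩
    · rcases ha12 with ha1 | ha2
      · exact Or.inl ⟨ha1, C_a1 E hC hr ha1⟩
      · exact Or.inr ⟨ha2, C_a2 E hC hr ha2⟩
    · rcases hc12 with hc1 | hc2
      · exact Or.inl ⟨hc1, C_c1 E hC hr hc1⟩
      · exact Or.inr ⟨hc2, C_c2 E hC hr hc2⟩
    · rintro ⟨rfl, rfl, hmem⟩
      have hmem' : (i, j) ∈ E ∧ edgeCond C (i, j) := hmem
      exact hmem'.2.2.2.2 hr
    · rintro ⟨rfl, rfl, hnmem, hf, hg⟩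
      obtain ⟨jd, hjdE, ⟨d₁, hd1⟩, ⟨d₂, hd2⟩⟩ := doubledL E hC hE
      have hjd : jd = j := (fPsi_eq E hC hjdE hd1 hd2).symm.trans hf
      rw [hjd] at hd1 hd2
      obtain ⟨id, hidE, ⟨b₁, hb1⟩, ⟨b₂, hb2⟩⟩ := doubledR E hC hE
      have hid : id = i := (gPsi_eq E hC hidE hb1 hb2).symm.trans hg
      rw [hid] at hb1 hb2
      obtain ⟨h11, h22⟩ := full_11 E hC hE hd1 hd2 hb1 hb2
      have h21 : (2, (i, j), 1) ∉ C := fun h => clique_E E hC.1 hr h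
      exact hnmem (⟨hE, h11, hr, h22, h21⟩ : (i, j) ∈ E ∧ edgeCond C (i, j))

end MC

/-- There is a bijection between maximal cliques of routes of `G(H)` and
matchings of `W(H)`; in particular their numbers agree. -/
theorem maxcliques_equiv_matchings (n m : ℕ) (hn : 1 ≤ n) (hm : 1 ≤ m) (E : Finset (ℕ × ℕ))
    (hE : ∀ p ∈ E, 1 ≤ p.1 ∧ p.1 ≤ n ∧ 1 ≤ p.2 ∧ p.2 ≤ m)
    (hdegS : ∀ i ∈ Finset.Icc 1 n, 2 ≤ (Nbr E i).card)
    (hdegT : ∀ j ∈ Finset.Icc 1 m, 2 ≤ (Nbr' E j).card) :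
    Nonempty
      (({C : Set Route // IsMaxClique E C}) ≃ ({M : Set WEdge // IsMatching E M})) ∧
    Nat.card {C : Set Route // IsMaxClique E C} =
      Nat.card {M : Set WEdge // IsMatching E M} := by
  have e : {C : Set Route // IsMaxClique E C} ≃ {M : Set WEdge // IsMatching E M} :=
    { toFun := fun C => ⟨MC.Psi E C.1, MC.psi_matching E C.2⟩
      invFun := fun M => ⟨MC.Phi E M.1, MC.phi_max E M.2⟩
      left_inv := fun C => Subtype.ext (MC.phi_psi E C.2)
      right_inv := fun M => Subtype.ext (MC.psi_phi E M.2) }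
  exact ⟨⟨e⟩, Nat.card_congr e⟩
end

section
/- Assume that for every nonempty set F with F ⊆ V₀ for some V₀ ∈ 𝒯, there exists a unique Cmax(F) ∈ 𝒯 containing F such that for every V ∈ 𝒯 with F ⊆ V there is a chain V = V_0 ⋖ V_1 ⋖ ⋯ ⋖ V_k = Cmax(F) in (𝒯, ≤) with F ⊆ V_l for every l. Then the half-open cells conv(V) ∖ ⋃_{V' ∈ 𝒯, V ⋖ V'} conv(V'), for V ∈ 𝒯, are pairwise disjoint and their union is P. -/
open Finset Filter Pointwise

lemma weights_eq {E : Type*} [AddCommGroup E] [Module ℝ E] {V : Finset E}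
    (h : AffineIndependent ℝ (fun p : {x // x ∈ V} => (p : E)))
    (w₁ w₂ : E → ℝ) (h₁ : ∑ y ∈ V, w₁ y = 1) (h₂ : ∑ y ∈ V, w₂ y = 1)
    (hc : ∑ y ∈ V, w₁ y • y = ∑ y ∈ V, w₂ y • y) : ∀ y ∈ V, w₁ y = w₂ y := by
  have hs₁ : ∑ i ∈ V.attach, w₁ (i : E) = 1 := by rw [Finset.sum_attach]; exact h₁
  have hs₂ : ∑ i ∈ V.attach, w₂ (i : E) = 1 := by rw [Finset.sum_attach]; exact h₂
  have hac : V.attach.affineCombination ℝ (fun p : {x // x ∈ V} => (p : E))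
        (fun i => w₁ (i : E)) =
      V.attach.affineCombination ℝ (fun p : {x // x ∈ V} => (p : E))
        (fun i => w₂ (i : E)) := by
    rw [affineCombination_eq_centerMass hs₁, affineCombination_eq_centerMass hs₂,
      Finset.centerMass_eq_of_sum_1 _ _ hs₁, Finset.centerMass_eq_of_sum_1 _ _ hs₂]
    rw [Finset.sum_attach V (fun y => w₁ y • y), Finset.sum_attach V (fun y => w₂ y • y)]
    exact hc
  have := h.indicator_eq_of_affineCombination_eq V.attach V.attach _ _ hs₁ hs₂ hac
  intro y hy
  have h3 := congrFun this ⟨y, hy⟩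
  simpa [Set.indicator_apply, Finset.mem_attach] using h3

lemma exists_support {E : Type*} [AddCommGroup E] [Module ℝ E] {V : Finset E}
    (h : AffineIndependent ℝ (fun p : {x // x ∈ V} => (p : E)))
    {x : E} (hx : x ∈ convexHull ℝ (V : Set E)) :
    ∃ F : Finset E, F.Nonempty ∧ F ⊆ V ∧ x ∈ convexHull ℝ (F : Set E) ∧
      ∀ S : Finset E, S ⊆ V → x ∈ convexHull ℝ (S : Set E) → F ⊆ S := by
  classical
  rw [Finset.convexHull_eq] at hx
  obtain ⟨w, hw0, hw1, hwx⟩ := hx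
  refine ⟨V.filter (fun y => w y ≠ 0), ?_, Finset.filter_subset _ _, ?_, ?_⟩
  · rw [Finset.filter_nonempty_iff]
    by_contra hcon
    push_neg at hcon
    rw [Finset.sum_congr rfl (fun y hy => hcon y hy)] at hw1
    simp at hw1
  · rw [Finset.convexHull_eq]
    refine ⟨w, fun y hy => hw0 y (Finset.mem_filter.1 hy).1, ?_, ?_⟩
    · rw [Finset.sum_filter_ne_zero]; exact hw1
    · rw [Finset.centerMass_filter_ne_zero]; exact hwx
  · intro S hS hxS
    rw [Finset.convexHull_eq] at hxS
    obtain ⟨w', hw'0, hw'1, hw'x⟩ := hxS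
    set w'' : E → ℝ := fun y => if y ∈ S then w' y else 0 with hw''
    have hsum : ∑ y ∈ V, w'' y = 1 := by
      rw [← hw'1]
      rw [Finset.sum_ite_mem]
      rw [Finset.inter_eq_right.2 hS]
    have hcm : ∑ y ∈ V, w y • y = ∑ y ∈ V, w'' y • y := by
      have h1 : ∑ y ∈ V, w'' y • y = ∑ y ∈ S, w' y • y := by
        rw [← Finset.sum_subset hS (fun y _ hy => by simp [hw'', hy])]
        exact Finset.sum_congr rfl (fun y hy => by simp [hw'', hy])
      rw [h1]
      have := Finset.centerMass_eq_of_sum_1 V id hw1 ▸ hwx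
      have h2 := Finset.centerMass_eq_of_sum_1 S id hw'1 ▸ hw'x
      simp only [id_eq] at this h2
      rw [this, h2]
    have heq := weights_eq h w w'' hw1 hsum hcm
    intro y hy
    obtain ⟨hyV, hwy⟩ := Finset.mem_filter.1 hy
    by_contra hyS
    exact hwy (by simpa [hw'', hyS] using heq y hyV)

/-- Lemma on half-open decompositions induced by a poset structure on a
triangulation whose Hasse diagram is the dual graph. -/
theorem halfopen_decomposition (N d : ℕ) (hN : 1 ≤ N)
    (𝒯 : Finset (Finset (Fin N → ℝ)))
    (hcard : ∀ V ∈ 𝒯, V.card = d + 1)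
    (hindep : ∀ V ∈ 𝒯, AffineIndependent ℝ (fun p : {x // x ∈ V} => (p : Fin N → ℝ)))
    (hinter : ∀ V ∈ 𝒯, ∀ V' ∈ 𝒯,
      convexHull ℝ (V : Set (Fin N → ℝ)) ∩ convexHull ℝ (V' : Set (Fin N → ℝ)) =
        convexHull ℝ ((V ∩ V' : Finset (Fin N → ℝ)) : Set (Fin N → ℝ)))
    -- a partial order on 𝒯
    (le : Finset (Fin N → ℝ) → Finset (Fin N → ℝ) → Prop)
    (hrefl : ∀ V ∈ 𝒯, le V V)
    (hantisymm : ∀ V ∈ 𝒯, ∀ V' ∈ 𝒯, le V V' → le V' V → V = V')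
    (htrans : ∀ V ∈ 𝒯, ∀ V' ∈ 𝒯, ∀ V'' ∈ 𝒯, le V V' → le V' V'' → le V V'')
    -- its cover relation
    (cov : Finset (Fin N → ℝ) → Finset (Fin N → ℝ) → Prop)
    (hcov : ∀ V ∈ 𝒯, ∀ V' ∈ 𝒯,
      (cov V V' ↔ (le V V' ∧ V ≠ V' ∧
        ¬ ∃ W ∈ 𝒯, W ≠ V ∧ W ≠ V' ∧ le V W ∧ le W V')))
    -- the Hasse diagram is the dual graph of the triangulation
    (hHasse : ∀ V ∈ 𝒯, ∀ V' ∈ 𝒯,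
      ((cov V V' ∨ cov V' V) ↔ (V ≠ V' ∧ (V ∩ V').card = d)))
    -- existence of Cmax(F) reachable by saturated chains containing F
    (hCmax : ∀ F : Finset (Fin N → ℝ), F.Nonempty → (∃ V₀ ∈ 𝒯, F ⊆ V₀) →
      ∃! Cm : Finset (Fin N → ℝ), Cm ∈ 𝒯 ∧ F ⊆ Cm ∧
        ∀ V ∈ 𝒯, F ⊆ V → ∃ k : ℕ, ∃ c : ℕ → Finset (Fin N → ℝ),
          c 0 = V ∧ c k = Cm ∧ (∀ l ≤ k, c l ∈ 𝒯 ∧ F ⊆ c l) ∧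
          (∀ l < k, cov (c l) (c (l + 1)))) :
    -- the half-open cells are pairwise disjoint and their union is P
    (∀ V ∈ 𝒯, ∀ V' ∈ 𝒯, V ≠ V' →
      ((convexHull ℝ (V : Set (Fin N → ℝ)) \
          ⋃ W ∈ {W | W ∈ 𝒯 ∧ cov V W}, convexHull ℝ (W : Set (Fin N → ℝ))) ∩
       (convexHull ℝ (V' : Set (Fin N → ℝ)) \
          ⋃ W ∈ {W | W ∈ 𝒯 ∧ cov V' W}, convexHull ℝ (W : Set (Fin N → ℝ)))) = ∅) ∧
    (⋃ V ∈ 𝒯, (convexHull ℝ (V : Set (Fin N → ℝ)) \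
        ⋃ W ∈ {W | W ∈ 𝒯 ∧ cov V W}, convexHull ℝ (W : Set (Fin N → ℝ)))) =
      ⋃ V ∈ 𝒯, convexHull ℝ (V : Set (Fin N → ℝ)) := by
  classical
  -- key point characterization
  have main : ∀ x : Fin N → ℝ, ∀ V₀ ∈ 𝒯, x ∈ convexHull ℝ (V₀ : Set (Fin N → ℝ)) →
      ∃ Cm ∈ 𝒯, ∀ V ∈ 𝒯,
        ((x ∈ convexHull ℝ (V : Set (Fin N → ℝ)) ∧
          ¬ ∃ W, (W ∈ 𝒯 ∧ cov V W) ∧ x ∈ convexHull ℝ (W : Set (Fin N → ℝ))) ↔ V = Cm) := by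
    intro x V₀ hV₀ hx
    obtain ⟨F, hFne, hFV₀, hxF, hmin⟩ := exists_support (hindep V₀ hV₀) hx
    obtain ⟨Cm, ⟨hCm𝒯, hFCm, hchain⟩, -⟩ := hCmax F hFne ⟨V₀, hV₀, hFV₀⟩
    have hmem : ∀ V ∈ 𝒯, (x ∈ convexHull ℝ (V : Set (Fin N → ℝ)) ↔ F ⊆ V) := by
      intro V hV
      constructor
      · intro hxV
        have hx2 : x ∈ convexHull ℝ ((V₀ ∩ V : Finset (Fin N → ℝ)) : Set (Fin N → ℝ)) := by
          rw [← hinter V₀ hV₀ V hV]; exact ⟨hx, hxV⟩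
        exact (hmin (V₀ ∩ V) Finset.inter_subset_left hx2).trans Finset.inter_subset_right
      · intro hFV
        exact convexHull_mono (by exact_mod_cast hFV) hxF
    refine ⟨Cm, hCm𝒯, fun V hV => ⟨?_, ?_⟩⟩
    · rintro ⟨hxV, hnocov⟩
      have hFV := (hmem V hV).1 hxV
      obtain ⟨k, c, hc0, hck, hcmem, hccov⟩ := hchain V hV hFV
      cases k with
      | zero => exact hc0 ▸ hck
      | succ k =>
        exfalso
        have h1 := hccov 0 (Nat.succ_pos k)
        have hm := hcmem 1 (Nat.succ_le_succ (Nat.zero_le k))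
        exact hnocov ⟨c 1, ⟨hm.1, hc0 ▸ h1⟩, (hmem (c 1) hm.1).2 hm.2⟩
    · intro hVCm; subst hVCm
      refine ⟨(hmem V hV).2 hFCm, ?_⟩
      rintro ⟨W, ⟨hW, hcovW⟩, hxW⟩
      have hFW := (hmem W hW).1 hxW
      obtain ⟨k, c, hc0, hck, hcmem, hccov⟩ := hchain W hW hFW
      have hle : ∀ l ≤ k, le (c 0) (c l) := by
        intro l hl
        induction l with
        | zero => exact hrefl (c 0) (hcmem 0 (Nat.zero_le k)).1
        | succ n ih =>
          have hn : n ≤ k := Nat.le_of_succ_le hl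
          have hcovn := hccov n (Nat.lt_of_succ_le hl)
          have hlen := ((hcov (c n) (hcmem n hn).1 (c (n+1)) (hcmem (n+1) hl).1).1 hcovn).1
          exact htrans (c 0) (hcmem 0 (Nat.zero_le k)).1 (c n) (hcmem n hn).1 (c (n+1))
            (hcmem (n+1) hl).1 (ih hn) hlen
      have hWCm : le W V := by
        have := hle k le_rfl
        rw [hc0, hck] at this
        exact this
      have hCmW : le V W := ((hcov V hV W hW).1 hcovW).1
      exact ((hcov V hV W hW).1 hcovW).2.1 (hantisymm V hV W hW hCmW hWCm)
  constructor
  · intro V hV V' hV' hne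
    rw [Set.eq_empty_iff_forall_notMem]
    rintro x ⟨⟨hxV, hnV⟩, ⟨hxV', hnV'⟩⟩
    obtain ⟨Cm, hCm, hiff⟩ := main x V hV hxV
    have h1 : V = Cm := (hiff V hV).1
      ⟨hxV, fun ⟨W, hWp, hxW⟩ => hnV (Set.mem_iUnion₂.2 ⟨W, hWp, hxW⟩)⟩
    have h2 : V' = Cm := (hiff V' hV').1
      ⟨hxV', fun ⟨W, hWp, hxW⟩ => hnV' (Set.mem_iUnion₂.2 ⟨W, hWp, hxW⟩)⟩
    exact hne (h1.trans h2.symm)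
  · ext x
    simp only [Set.mem_iUnion, exists_prop]
    constructor
    · rintro ⟨V, hV, hxV⟩
      exact ⟨V, hV, hxV.1⟩
    · rintro ⟨V₀, hV₀, hx⟩
      obtain ⟨Cm, hCm, hiff⟩ := main x V₀ hV₀ hx
      obtain ⟨h1, h2⟩ := (hiff Cm hCm).2 rfl
      refine ⟨Cm, hCm, h1, fun hmem => h2 ?_⟩
      obtain ⟨W, hWp, hxW⟩ := Set.mem_iUnion₂.1 hmem
      exact ⟨W, hWp, hxW⟩
end
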